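/- arXiv:2112.10858 — 7 statements merged into one kernel-verified Lean document; each statement's English description precedes it below -/
import Mathlib

section
/- Let ε₁,…,εₙ be independent real random variables and let f,g : ℝⁿ → ℝ be bounded measurable functions that are non-decreasing in each coordinate. Then Cov(f(ε₁,…,εₙ), g(ε₁,…,εₙ)) ≥ 0. -/
open MeasureTheory ProbabilityTheory Filter Set

/-- Tail probability `P(X > x)` as a real number. -/
noncomputable def tailP {Ω : Type*} [MeasurableSpace Ω] (μ : Measure Ω) (X : Ω → ℝ) (x : ℝ) : ℝ :=
  (μ {ω | x < X ω}).toReal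

/-- `L` is slowly varying: `L(αx)/L(x) → 1` as `x → ∞`, for every `α > 0`. -/
def SlowlyVarying (L : ℝ → ℝ) : Prop :=
  ∀ α : ℝ, 0 < α → Tendsto (fun x => L (α * x) / L x) atTop (nhds 1)

/-- `X` is regularly varying with tail index `θ`: `P(X > x) = x^{-θ} L(x)` with `L` slowly varying. -/
def RegVarying {Ω : Type*} [MeasurableSpace Ω] (μ : Measure Ω) (X : Ω → ℝ) (θ : ℝ) : Prop :=
  ∃ L : ℝ → ℝ, SlowlyVarying L ∧ ∀ x : ℝ, 0 < x → tailP μ X x = x ^ (-θ) * L x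

/-- Conditional probability `P(A | B)` as a real number. -/
noncomputable def condP {Ω : Type*} [MeasurableSpace Ω] (μ : Measure Ω) (A B : Set Ω) : ℝ :=
  (μ (A ∩ B)).toReal / (μ B).toReal

/-- Conditional expectation `E[g | B]` as a real number. -/
noncomputable def condE {Ω : Type*} [MeasurableSpace Ω] (μ : Measure Ω) (B : Set Ω) (g : Ω → ℝ) : ℝ :=
  (∫ ω in B, g ω ∂μ) / (μ B).toReal

/-- Cumulative distribution function of `X`. -/
noncomputable def cdfR {Ω : Type*} [MeasurableSpace Ω] (μ : Measure Ω) (X : Ω → ℝ) (t : ℝ) : ℝ :=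
  (μ {ω | X ω ≤ t}).toReal


lemma bdd_integrable {α : Type*} [MeasurableSpace α] (μ : Measure α) [IsFiniteMeasure μ]
    {f : α → ℝ} (hf : Measurable f) {C : ℝ} (hC : ∀ x, |f x| ≤ C) : Integrable f μ :=
  (integrable_const C).mono' hf.aestronglyMeasurable
    (Filter.Eventually.of_forall fun x => by simpa [Real.norm_eq_abs] using hC x)

lemma abs_mul_le {a b C D : ℝ} (h1 : |a| ≤ C) (h2 : |b| ≤ D) : |a * b| ≤ |C| * |D| := by
  rw [abs_mul]
  exact mul_le_mul (h1.trans (le_abs_self _)) (h2.trans (le_abs_self _)) (abs_nonneg _)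
    (abs_nonneg _)

/-- 1-D Chebyshev correlation inequality. -/
lemma chebyshev_one_dim (ν : Measure ℝ) [IsProbabilityMeasure ν]
    {f g : ℝ → ℝ} (hf : Measurable f) (hg : Measurable g)
    {C D : ℝ} (hfb : ∀ x, |f x| ≤ C) (hgb : ∀ x, |g x| ≤ D)
    (hfm : Monotone f) (hgm : Monotone g) :
    (∫ x, f x ∂ν) * (∫ x, g x ∂ν) ≤ ∫ x, f x * g x ∂ν := by
  set π := ν.prod ν with hπ
  have h11 : Integrable (fun z : ℝ × ℝ => f z.1 * g z.1) π :=
    bdd_integrable _ ((hf.comp measurable_fst).mul (hg.comp measurable_fst))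
      (fun z => abs_mul_le (hfb z.1) (hgb z.1))
  have h22 : Integrable (fun z : ℝ × ℝ => f z.2 * g z.2) π :=
    bdd_integrable _ ((hf.comp measurable_snd).mul (hg.comp measurable_snd))
      (fun z => abs_mul_le (hfb z.2) (hgb z.2))
  have h12 : Integrable (fun z : ℝ × ℝ => f z.1 * g z.2) π :=
    bdd_integrable _ ((hf.comp measurable_fst).mul (hg.comp measurable_snd))
      (fun z => abs_mul_le (hfb z.1) (hgb z.2))
  have h21 : Integrable (fun z : ℝ × ℝ => g z.1 * f z.2) π :=
    bdd_integrable _ ((hg.comp measurable_fst).mul (hf.comp measurable_snd))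
      (fun z => abs_mul_le (hgb z.1) (hfb z.2))
  have key : 0 ≤ ∫ z : ℝ × ℝ, (f z.1 - f z.2) * (g z.1 - g z.2) ∂π := by
    refine integral_nonneg fun z => ?_
    show (0:ℝ) ≤ (f z.1 - f z.2) * (g z.1 - g z.2)
    rcases le_total z.1 z.2 with h | h
    · nlinarith [sub_nonpos.2 (hfm h), sub_nonpos.2 (hgm h)]
    · nlinarith [sub_nonneg.2 (hfm h), sub_nonneg.2 (hgm h)]
  have expand : (∫ z : ℝ × ℝ, (f z.1 - f z.2) * (g z.1 - g z.2) ∂π)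
      = ((∫ z : ℝ × ℝ, f z.1 * g z.1 ∂π) + (∫ z : ℝ × ℝ, f z.2 * g z.2 ∂π))
        - ((∫ z : ℝ × ℝ, f z.1 * g z.2 ∂π) + (∫ z : ℝ × ℝ, g z.1 * f z.2 ∂π)) := by
    have hA : Integrable (fun z : ℝ × ℝ => f z.1 * g z.1 + f z.2 * g z.2) π := h11.add h22
    have hB : Integrable (fun z : ℝ × ℝ => f z.1 * g z.2 + g z.1 * f z.2) π := h12.add h21
    rw [← integral_add h11 h22, ← integral_add h12 h21, ← integral_sub hA hB]
    refine integral_congr_ae (Filter.Eventually.of_forall fun z => ?_)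
    ring
  rw [expand] at key
  have e1 : (∫ z : ℝ × ℝ, f z.1 * g z.1 ∂π) = ∫ x, f x * g x ∂ν := by
    have := integral_prod_mul (μ := ν) (ν := ν) (f := fun x => f x * g x) (g := fun _ => (1:ℝ))
    simpa using this
  have e2 : (∫ z : ℝ × ℝ, f z.2 * g z.2 ∂π) = ∫ x, f x * g x ∂ν := by
    have := integral_prod_mul (μ := ν) (ν := ν) (f := fun _ => (1:ℝ)) (g := fun x => f x * g x)
    simpa using this
  have e3 : (∫ z : ℝ × ℝ, f z.1 * g z.2 ∂π) = (∫ x, f x ∂ν) * (∫ x, g x ∂ν) :=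
    integral_prod_mul f g
  have e4 : (∫ z : ℝ × ℝ, g z.1 * f z.2 ∂π) = (∫ x, f x ∂ν) * (∫ x, g x ∂ν) := by
    rw [integral_prod_mul g f]; ring
  rw [e1, e2, e3, e4] at key
  linarith

lemma abs_integral_le_of_le {α : Type*} [MeasurableSpace α] (μ : Measure α)
    [IsProbabilityMeasure μ] (f : α → ℝ) {C : ℝ} (h : ∀ x, |f x| ≤ C) :
    |∫ x, f x ∂μ| ≤ C := by
  have := norm_integral_le_of_norm_le_const (μ := μ) (f := f) (C := C)
    (Filter.Eventually.of_forall fun x => by simpa [Real.norm_eq_abs] using h x)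
  simpa [Real.norm_eq_abs, measure_univ] using this

lemma pi_assoc (n : ℕ) : ∀ (ν : Fin n → Measure ℝ), (∀ i, IsProbabilityMeasure (ν i)) →
    ∀ (f g : (Fin n → ℝ) → ℝ) (C D : ℝ), Measurable f → Measurable g →
    (∀ x, |f x| ≤ C) → (∀ x, |g x| ≤ D) → Monotone f → Monotone g →
    (∫ x, f x ∂Measure.pi ν) * (∫ x, g x ∂Measure.pi ν) ≤ ∫ x, f x * g x ∂Measure.pi ν := by
  induction n with
  | zero =>
      intro ν hν f g C D hf hg hfb hgb hfm hgm
      haveI := hν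
      have hf0 : ∀ x : Fin 0 → ℝ, f x = f default := fun x => congrArg f (Subsingleton.elim _ _)
      have hg0 : ∀ x : Fin 0 → ℝ, g x = g default := fun x => congrArg g (Subsingleton.elim _ _)
      simp [hf0, hg0, integral_const, measure_univ]
  | succ n ih =>
      intro ν hν f g C D hf hg hfb hgb hfm hgm
      haveI := hν
      set e := MeasurableEquiv.piFinSuccAbove (fun _ : Fin (n + 1) => ℝ) 0 with he
      set ρ := Measure.pi fun j => ν ((0 : Fin (n + 1)).succAbove j) with hρ
      haveI : ∀ j, IsProbabilityMeasure (ν ((0 : Fin (n + 1)).succAbove j)) := fun j => hν _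
      have hmp : MeasurePreserving e (Measure.pi ν) ((ν 0).prod ρ) :=
        measurePreserving_piFinSuccAbove ν 0
      have hmps : MeasurePreserving e.symm ((ν 0).prod ρ) (Measure.pi ν) :=
        MeasurePreserving.symm e hmp
      have hsymm : ∀ (t : ℝ) (y : Fin n → ℝ),
          e.symm (t, y) = (0 : Fin (n + 1)).insertNth t y := by
        intro t y
        simp [he, MeasurableEquiv.piFinSuccAbove_symm_apply, Fin.insertNthEquiv]
      have mono_ins : ∀ {t t' : ℝ} {y y' : Fin n → ℝ}, t ≤ t' → y ≤ y' →
          e.symm (t, y) ≤ e.symm (t', y') := by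
        intro t t' y y' ht hy
        rw [hsymm, hsymm, Fin.insertNth_le_iff]
        constructor
        · simpa using ht
        · intro j; simpa using hy j
      -- master formula
      have master : ∀ (F : (Fin (n + 1) → ℝ) → ℝ) (E : ℝ), Measurable F → (∀ x, |F x| ≤ E) →
          (∫ x, F x ∂Measure.pi ν) = ∫ t, ∫ y, F (e.symm (t, y)) ∂ρ ∂(ν 0) := by
        intro F E hF hFb
        rw [← hmps.integral_comp e.symm.measurableEmbedding F]
        exact integral_prod _ (bdd_integrable _ (hF.comp e.symm.measurable)
          (fun z => hFb _))
      set Φ : ℝ → ℝ := fun t => ∫ y, f (e.symm (t, y)) ∂ρ with hΦ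
      set Ψ : ℝ → ℝ := fun t => ∫ y, g (e.symm (t, y)) ∂ρ with hΨ
      have hΦmono : Monotone Φ := by
        intro t t' ht
        refine integral_mono (bdd_integrable _ ((hf.comp e.symm.measurable).comp
            (measurable_const.prodMk measurable_id)) (C := C) (fun y => hfb _))
          (bdd_integrable _ ((hf.comp e.symm.measurable).comp
            (measurable_const.prodMk measurable_id)) (C := C) (fun y => hfb _))
          (fun y => hfm (mono_ins ht le_rfl))
      have hΨmono : Monotone Ψ := by
        intro t t' ht
        refine integral_mono (bdd_integrable _ ((hg.comp e.symm.measurable).comp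
            (measurable_const.prodMk measurable_id)) (C := D) (fun y => hgb _))
          (bdd_integrable _ ((hg.comp e.symm.measurable).comp
            (measurable_const.prodMk measurable_id)) (C := D) (fun y => hgb _))
          (fun y => hgm (mono_ins ht le_rfl))
      have hΦb : ∀ t, |Φ t| ≤ C := fun t => abs_integral_le_of_le ρ _ (fun y => hfb _)
      have hΨb : ∀ t, |Ψ t| ≤ D := fun t => abs_integral_le_of_le ρ _ (fun y => hgb _)
      -- pointwise induction hypothesis
      have hpt : ∀ t : ℝ, Φ t * Ψ t ≤ ∫ y, f (e.symm (t, y)) * g (e.symm (t, y)) ∂ρ := by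
        intro t
        exact ih (fun j => ν ((0 : Fin (n + 1)).succAbove j)) (fun j => hν _)
          (fun y => f (e.symm (t, y))) (fun y => g (e.symm (t, y))) C D
          ((hf.comp e.symm.measurable).comp (measurable_const.prodMk measurable_id))
          ((hg.comp e.symm.measurable).comp (measurable_const.prodMk measurable_id))
          (fun y => hfb _) (fun y => hgb _)
          (fun y y' hy => hfm (mono_ins le_rfl hy))
          (fun y y' hy => hgm (mono_ins le_rfl hy))
      have hfgprod : Integrable (fun z : ℝ × (Fin n → ℝ) => f (e.symm z) * g (e.symm z))
          ((ν 0).prod ρ) :=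
        bdd_integrable _ ((hf.comp e.symm.measurable).mul (hg.comp e.symm.measurable))
          (C := |C| * |D|) (fun z => abs_mul_le (hfb _) (hgb _))
      have step1 : (∫ t, Φ t * Ψ t ∂(ν 0))
          ≤ ∫ t, ∫ y, f (e.symm (t, y)) * g (e.symm (t, y)) ∂ρ ∂(ν 0) := by
        refine integral_mono (bdd_integrable _ (hΦmono.measurable.mul hΨmono.measurable)
          (C := |C| * |D|) (fun t => abs_mul_le (hΦb t) (hΨb t)))
          hfgprod.integral_prod_left (fun t => hpt t)
      have step2 : (∫ t, Φ t ∂(ν 0)) * (∫ t, Ψ t ∂(ν 0)) ≤ ∫ t, Φ t * Ψ t ∂(ν 0) :=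
        chebyshev_one_dim (ν 0) hΦmono.measurable hΨmono.measurable hΦb hΨb hΦmono hΨmono
      have ef : (∫ x, f x ∂Measure.pi ν) = ∫ t, Φ t ∂(ν 0) := master f C hf hfb
      have eg : (∫ x, g x ∂Measure.pi ν) = ∫ t, Ψ t ∂(ν 0) := master g D hg hgb
      have efg : (∫ x, f x * g x ∂Measure.pi ν)
          = ∫ t, ∫ y, f (e.symm (t, y)) * g (e.symm (t, y)) ∂ρ ∂(ν 0) :=
        master (fun x => f x * g x) (|C| * |D|) (hf.mul hg)
          (fun x => abs_mul_le (hfb x) (hgb x))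
      rw [ef, eg, efg]
      exact le_trans step2 step1


/-- Association of independent random variables: coordinatewise non-decreasing
bounded measurable functions of independent random variables are non-negatively correlated. -/
theorem stmt_0 {Ω : Type*} [MeasurableSpace Ω] (μ : Measure Ω) [IsProbabilityMeasure μ]
    (n : ℕ) (ε : Fin n → Ω → ℝ) (hmeas : ∀ i, Measurable (ε i))
    (hindep : iIndepFun ε μ)
    (f g : (Fin n → ℝ) → ℝ) (hf : Measurable f) (hg : Measurable g)
    (hfb : ∃ C : ℝ, ∀ x, |f x| ≤ C) (hgb : ∃ C : ℝ, ∀ x, |g x| ≤ C)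
    (hfm : Monotone f) (hgm : Monotone g) :
    0 ≤ (∫ ω, f (fun i => ε i ω) * g (fun i => ε i ω) ∂μ)
        - (∫ ω, f (fun i => ε i ω) ∂μ) * (∫ ω, g (fun i => ε i ω) ∂μ) := by
  obtain ⟨C, hfb⟩ := hfb
  obtain ⟨D, hgb⟩ := hgb
  set e : Ω → (Fin n → ℝ) := fun ω i => ε i ω with he
  have hemeas : Measurable e := measurable_pi_lambda _ hmeas
  haveI : ∀ i, IsProbabilityMeasure (μ.map (ε i)) :=
    fun i => Measure.isProbabilityMeasure_map (hmeas i).aemeasurable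
  have hmap : Measure.pi (fun i => μ.map (ε i)) = μ.map e := by
    refine Measure.pi_eq fun s hs => ?_
    rw [Measure.map_apply hemeas (MeasurableSet.univ_pi hs)]
    have hpre : e ⁻¹' Set.univ.pi s = ⋂ i ∈ Finset.univ, ε i ⁻¹' s i := by
      ext ω
      simp [he, Set.mem_pi]
    rw [hpre, hindep.measure_inter_preimage_eq_mul Finset.univ (fun i _ => hs i)]
    refine Finset.prod_congr rfl fun i _ => ?_
    rw [Measure.map_apply (hmeas i) (hs i)]
  have i1 : (∫ ω, f (fun i => ε i ω) ∂μ) = ∫ x, f x ∂(μ.map e) :=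
    (integral_map hemeas.aemeasurable hf.aestronglyMeasurable).symm
  have i2 : (∫ ω, g (fun i => ε i ω) ∂μ) = ∫ x, g x ∂(μ.map e) :=
    (integral_map hemeas.aemeasurable hg.aestronglyMeasurable).symm
  have i3 : (∫ ω, f (fun i => ε i ω) * g (fun i => ε i ω) ∂μ)
      = ∫ x, f x * g x ∂(μ.map e) :=
    (integral_map hemeas.aemeasurable (hf.mul hg).aestronglyMeasurable).symm
  rw [i1, i2, i3, ← hmap]
  have := pi_assoc n (fun i => μ.map (ε i)) (fun i => inferInstance) f g C D hf hg hfb hgb hfm hgm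
  linarith
end

section
/- Let ε₀,…,εₙ be iid continuous regularly varying random variables with tail index θ > 0, and let a₀,…,aₙ > 0 and b₀,…,bₙ > 0 be strictly positive constants. Then for every λ ∈ ℝ, lim_{u→∞} P(∑_{i=0}^n aᵢεᵢ < λ ∣ ∑_{i=0}^n bᵢεᵢ > u) = 0. -/
open MeasureTheory ProbabilityTheory Filter Set

/-- for iid continuous regularly varying ε₀,…,εₙ and strictly positive weights,
P(∑ aᵢεᵢ < λ | ∑ bᵢεᵢ > u) → 0 as u → ∞. -/
theorem stmt_4 {Ω : Type*} [MeasurableSpace Ω] (μ : Measure Ω) [IsProbabilityMeasure μ]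
    (n : ℕ) (ε : Fin (n + 1) → Ω → ℝ) (hmeas : ∀ i, Measurable (ε i))
    (hindep : iIndepFun ε μ)
    (hident : ∀ i, Measure.map (ε i) μ = Measure.map (ε 0) μ)
    (hcont : ∀ i, ∀ c : ℝ, μ {ω | ε i ω = c} = 0)
    (θ : ℝ) (hθ : 0 < θ) (hrv : RegVarying μ (ε 0) θ)
    (a b : Fin (n + 1) → ℝ) (ha : ∀ i, 0 < a i) (hb : ∀ i, 0 < b i)
    (l : ℝ) :
    Tendsto (fun u => condP μ {ω | ∑ i, a i * ε i ω < l} {ω | u < ∑ i, b i * ε i ω})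
      atTop (nhds 0) := by
  classical
  obtain ⟨L, hsv, hL⟩ := hrv
  set A : Set Ω := {ω | ∑ i, a i * ε i ω < l} with hA
  set ν : Measure ℝ := Measure.map (ε 0) μ with hν
  have hνprob : IsProbabilityMeasure ν := Measure.isProbabilityMeasure_map (hmeas 0).aemeasurable
  have hmapIoi : ∀ (i) (x : ℝ), μ {ω | x < ε i ω} = ν (Ioi x) := by
    intro i x
    have h1 : {ω | x < ε i ω} = ε i ⁻¹' Ioi x := rfl
    rw [h1, ← Measure.map_apply (hmeas i) measurableSet_Ioi, hident i]
  have hmapIic : ∀ (i) (x : ℝ), μ {ω | ε i ω ≤ x} = ν (Iic x) := by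
    intro i x
    have h1 : {ω | ε i ω ≤ x} = ε i ⁻¹' Iic x := rfl
    rw [h1, ← Measure.map_apply (hmeas i) measurableSet_Iic, hident i]
  set T : ℝ → ℝ := fun x => (ν (Ioi x)).toReal with hT
  have hTform : ∀ x : ℝ, 0 < x → T x = x ^ (-θ) * L x := by
    intro x hx
    have h1 := hL x hx
    rw [tailP, hmapIoi 0 x] at h1
    exact h1
  have hTanti : ∀ x y : ℝ, x ≤ y → T y ≤ T x := by
    intro x y hxy
    exact ENNReal.toReal_mono (measure_ne_top _ _) (measure_mono (Ioi_subset_Ioi hxy))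
  have hTpos : ∀ x : ℝ, 0 < x → 0 < T x := by
    intro x hx
    rcases lt_or_ge 0 (T x) with h | h
    · exact h
    exfalso
    have hTx : T x = 0 := le_antisymm h ENNReal.toReal_nonneg
    have hzero : ∀ y : ℝ, x ≤ y → L y = 0 := by
      intro y hy
      have hy0 : 0 < y := lt_of_lt_of_le hx hy
      have hTy : T y = 0 := le_antisymm (hTx ▸ hTanti x y hy) ENNReal.toReal_nonneg
      have h2 : y ^ (-θ) * L y = 0 := (hTform y hy0).symm.trans hTy
      rcases mul_eq_zero.mp h2 with h' | h'
      · exact absurd h' (ne_of_gt (Real.rpow_pos_of_pos hy0 _))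
      · exact h'
    have h1 : Tendsto (fun y => L (1 * y) / L y) atTop (nhds 1) := hsv 1 one_pos
    have h0 : Tendsto (fun y => L (1 * y) / L y) atTop (nhds 0) := by
      apply Tendsto.congr' _ (tendsto_const_nhds (x := (0:ℝ)))
      filter_upwards [eventually_ge_atTop x] with y hy
      rw [one_mul, hzero y hy, div_zero]
    exact zero_ne_one (tendsto_nhds_unique h0 h1)
  have hLpos : ∀ x : ℝ, 0 < x → 0 < L x := by
    intro x hx
    have h1 := hTpos x hx
    rw [hTform x hx] at h1
    nlinarith [Real.rpow_pos_of_pos hx (-θ)]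
  rcases Nat.eq_zero_or_pos n with rfl | hn
  · -- n = 0: the intersection is eventually empty
    apply Tendsto.congr' _ (tendsto_const_nhds (x := (0:ℝ)))
    filter_upwards [eventually_ge_atTop (b 0 * (l / a 0))] with u hu
    have hempty : (A ∩ {ω | u < ∑ i, b i * ε i ω}) = ∅ := by
      ext ω
      simp only [hA, mem_inter_iff, mem_setOf_eq, mem_empty_iff_false, iff_false, not_and]
      intro h1 h2
      rw [Fin.sum_univ_one] at h1
      rw [Fin.sum_univ_one] at h2
      have h3 : ε 0 ω < l / a 0 := by
        rw [lt_div_iff₀ (ha 0)]; linarith [mul_comm (a 0) (ε 0 ω)]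
      have h4 : b 0 * ε 0 ω < b 0 * (l / a 0) := mul_lt_mul_of_pos_left h3 (hb 0)
      linarith
    simp only [condP, hempty, measure_empty, ENNReal.toReal_zero, zero_div]
  -- main case : n ≥ 1
  obtain ⟨i₀, -, hmin⟩ := Finset.exists_min_image Finset.univ a ⟨0, Finset.mem_univ 0⟩
  obtain ⟨i₁, -, hmax⟩ := Finset.exists_max_image Finset.univ a ⟨0, Finset.mem_univ 0⟩
  set αm := a i₀ with hαm'
  set Am := a i₁ with hAm'
  have hαm : 0 < αm := ha i₀
  have hAm : 0 < Am := ha i₁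
  have hminle : ∀ j, αm ≤ a j := fun j => hmin j (Finset.mem_univ j)
  have hmaxle : ∀ j, a j ≤ Am := fun j => hmax j (Finset.mem_univ j)
  set B₀ : ℝ := ∑ i, b i with hB₀'
  have hB₀ : 0 < B₀ := Finset.sum_pos (fun i _ => hb i) ⟨0, Finset.mem_univ 0⟩
  have hbB : ∀ j, b j ≤ B₀ := fun j =>
    Finset.single_le_sum (fun i _ => (hb i).le) (Finset.mem_univ j)
  have hn1 : (0:ℝ) < (n:ℝ) + 1 := by positivity
  set c : ℝ := (((n:ℝ)+1) * B₀)⁻¹ with hc'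
  have hc : 0 < c := by rw [hc']; positivity
  set D : ℝ → ℝ := fun u => ((l - αm * (c * u)) / n) / Am with hD'
  -- lower bound for the denominator
  have hdenom : ∀ u : ℝ, T (u / b 0) * T 1 ^ n ≤ (μ {ω | u < ∑ i, b i * ε i ω}).toReal := by
    intro u
    set sets : Fin (n+1) → Set ℝ := fun i => Ioi (if i = 0 then u / b 0 else 1) with hsets
    have hsub : (⋂ i, ε i ⁻¹' sets i) ⊆ {ω | u < ∑ i, b i * ε i ω} := by
      intro ω hω
      simp only [mem_iInter, mem_preimage, hsets, mem_Ioi] at hω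
      have h0 : u / b 0 < ε 0 ω := by simpa using hω 0
      have hkey : u < b 0 * ε 0 ω := by
        rw [div_lt_iff₀ (hb 0)] at h0
        linarith [mul_comm (ε 0 ω) (b 0)]
      have hrest : (0:ℝ) ≤ ∑ i : Fin n, b i.succ * ε i.succ ω := by
        apply Finset.sum_nonneg
        intro i _
        have h2 := hω i.succ
        rw [if_neg (Fin.succ_ne_zero i)] at h2
        exact (mul_pos (hb _) (lt_trans one_pos h2)).le
      show u < ∑ i, b i * ε i ω
      rw [Fin.sum_univ_succ]
      linarith
    have hprod : μ (⋂ i, ε i ⁻¹' sets i) = ∏ i, μ (ε i ⁻¹' sets i) := by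
      have h1 := hindep.measure_inter_preimage_eq_mul Finset.univ
        (sets := sets) (fun i _ => measurableSet_Ioi)
      simpa using h1
    have hcalc : μ (⋂ i, ε i ⁻¹' sets i) = ν (Ioi (u / b 0)) * (ν (Ioi 1))^n := by
      rw [hprod]
      have h1 : ∀ i : Fin (n+1), μ (ε i ⁻¹' sets i) = ν (Ioi (if i = 0 then u / b 0 else 1)) :=
        fun i => hmapIoi i _
      rw [Fin.prod_univ_succ]
      rw [h1 0, if_pos rfl]
      congr 1
      rw [Finset.prod_congr rfl (fun i _ => by rw [h1 i.succ, if_neg (Fin.succ_ne_zero i)]),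
        Finset.prod_const, Finset.card_univ, Fintype.card_fin]
    calc T (u / b 0) * T 1 ^ n = ((ν (Ioi (u / b 0)) * (ν (Ioi 1))^n)).toReal := by
          rw [ENNReal.toReal_mul, ENNReal.toReal_pow]
      _ = (μ (⋂ i, ε i ⁻¹' sets i)).toReal := by rw [hcalc]
      _ ≤ _ := ENNReal.toReal_mono (measure_ne_top _ _) (measure_mono hsub)
  -- upper bound for the numerator
  set u₀ : ℝ := max 1 (l / (αm * c)) with hu₀'
  have hnum : ∀ u : ℝ, u₀ ≤ u →
      (μ (A ∩ {ω | u < ∑ i, b i * ε i ω})).toReal ≤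
        ((n:ℝ)+1)^2 * (T (c*u) * cdf ν (D u)) := by
    intro u hu
    have hu1 : (1:ℝ) ≤ u := le_trans (le_max_left _ _) hu
    have hupos : (0:ℝ) < u := lt_of_lt_of_le one_pos hu1
    have hq : l - αm * (c * u) ≤ 0 := by
      have h1 : l / (αm * c) ≤ u := le_trans (le_max_right _ _) hu
      rw [div_le_iff₀ (mul_pos hαm hc)] at h1
      nlinarith
    have hsub : A ∩ {ω | u < ∑ i, b i * ε i ω} ⊆
        ⋃ j, ⋃ i, ⋃ (_ : i ≠ j), (ε j ⁻¹' Ioi (c*u) ∩ ε i ⁻¹' Iic (D u)) := by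
      rintro ω ⟨hωA, hωB⟩
      have hωA' : ∑ i, a i * ε i ω < l := hωA
      have hωB' : u < ∑ i, b i * ε i ω := hωB
      have hsum : ∑ _i : Fin (n+1), (u / ((n:ℝ)+1)) < ∑ i, b i * ε i ω := by
        rw [Finset.sum_const, Finset.card_univ, Fintype.card_fin, nsmul_eq_mul]
        have h2 : ((n+1 : ℕ):ℝ) * (u / ((n:ℝ)+1)) = u := by
          push_cast
          field_simp
        rw [h2]
        exact hωB'
      obtain ⟨j, -, hj⟩ := Finset.exists_lt_of_sum_lt hsum
      have hεj : c * u < ε j ω := by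
        have h1 : u / ((n:ℝ)+1) / b j < ε j ω := by
          rw [div_lt_iff₀ (hb j)]
          linarith [mul_comm (ε j ω) (b j)]
        refine lt_of_le_of_lt ?_ h1
        have h2 : c * u = u / ((n:ℝ)+1) / B₀ := by
          rw [hc']
          field_simp
        rw [h2]
        exact div_le_div_of_nonneg_left (by positivity) (hb j) (hbB j)
      have hsum2 : ∑ i ∈ Finset.univ.erase j, a i * ε i ω < l - a j * ε j ω := by
        have h3 := Finset.add_sum_erase Finset.univ (fun i => a i * ε i ω) (Finset.mem_univ j)
        linarith
      have hsum3 : ∑ i ∈ Finset.univ.erase j, a i * ε i ω <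
          ∑ _i ∈ Finset.univ.erase j, ((l - αm * (c*u)) / n) := by
        rw [Finset.sum_const, Finset.card_erase_of_mem (Finset.mem_univ j), Finset.card_univ,
          Fintype.card_fin, Nat.add_sub_cancel, nsmul_eq_mul]
        have hnne : ((n:ℝ)) ≠ 0 := by positivity
        have h4 : ((n:ℝ)) * ((l - αm * (c*u)) / n) = l - αm * (c*u) := by field_simp
        rw [h4]
        have h5 : αm * (c * u) ≤ a j * ε j ω := by
          have hcu : (0:ℝ) < c * u := mul_pos hc hupos
          nlinarith [hminle j, hεj.le, ha j]
        linarith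
      obtain ⟨i, hi, hlt⟩ := Finset.exists_lt_of_sum_lt hsum3
      have hij : i ≠ j := (Finset.mem_erase.mp hi).1
      have hεi : ε i ω ≤ D u := by
        have h1 : ε i ω < ((l - αm * (c*u)) / n) / a i := by
          rw [lt_div_iff₀ (ha i)]
          linarith [mul_comm (ε i ω) (a i)]
        refine le_trans h1.le ?_
        have hqn : (l - αm * (c*u)) / n ≤ 0 :=
          div_nonpos_of_nonpos_of_nonneg hq (by positivity)
        simp only [hD']
        rw [div_eq_mul_inv ((l - αm * (c*u)) / n) (a i),
          div_eq_mul_inv ((l - αm * (c*u)) / n) Am]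
        exact mul_le_mul_of_nonpos_left (inv_anti₀ (ha i) (hmaxle i)) hqn
      exact mem_iUnion.mpr ⟨j, mem_iUnion.mpr ⟨i, mem_iUnion.mpr ⟨hij,
        ⟨mem_Ioi.mpr hεj, mem_Iic.mpr hεi⟩⟩⟩⟩
    have hpair : ∀ j i : Fin (n+1),
        μ (⋃ (_ : i ≠ j), (ε j ⁻¹' Ioi (c*u) ∩ ε i ⁻¹' Iic (D u))) ≤
          ν (Ioi (c*u)) * ν (Iic (D u)) := by
      intro j i
      by_cases hij : i = j
      · simp [hij]
      · have h1 : (⋃ (_ : i ≠ j), (ε j ⁻¹' Ioi (c*u) ∩ ε i ⁻¹' Iic (D u))) =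
            ε j ⁻¹' Ioi (c*u) ∩ ε i ⁻¹' Iic (D u) := by
          simp [hij]
        rw [h1]
        have hIndep : IndepFun (ε j) (ε i) μ :=
          hindep.indepFun (fun h => hij h.symm)
        refine le_of_eq ?_
        calc μ (ε j ⁻¹' Ioi (c*u) ∩ ε i ⁻¹' Iic (D u))
            = μ (ε j ⁻¹' Ioi (c*u)) * μ (ε i ⁻¹' Iic (D u)) :=
              hIndep.measure_inter_preimage_eq_mul _ _ measurableSet_Ioi measurableSet_Iic
          _ = ν (Ioi (c*u)) * ν (Iic (D u)) := by
              rw [show ε j ⁻¹' Ioi (c*u) = {ω | c*u < ε j ω} from rfl,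
                show ε i ⁻¹' Iic (D u) = {ω | ε i ω ≤ D u} from rfl,
                hmapIoi, hmapIic]
    have hμ : μ (A ∩ {ω | u < ∑ i, b i * ε i ω}) ≤
        ((n+1 : ℕ) : ENNReal)^2 * (ν (Ioi (c*u)) * ν (Iic (D u))) := by
      calc μ (A ∩ {ω | u < ∑ i, b i * ε i ω})
          ≤ μ (⋃ j, ⋃ i, ⋃ (_ : i ≠ j), (ε j ⁻¹' Ioi (c*u) ∩ ε i ⁻¹' Iic (D u))) :=
            measure_mono hsub
        _ ≤ ∑ j, μ (⋃ i, ⋃ (_ : i ≠ j), (ε j ⁻¹' Ioi (c*u) ∩ ε i ⁻¹' Iic (D u))) :=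
            measure_iUnion_fintype_le _ _
        _ ≤ ∑ j : Fin (n+1), ∑ i : Fin (n+1),
              μ (⋃ (_ : i ≠ j), (ε j ⁻¹' Ioi (c*u) ∩ ε i ⁻¹' Iic (D u))) :=
            Finset.sum_le_sum fun j _ => measure_iUnion_fintype_le _ _
        _ ≤ ∑ _j : Fin (n+1), ∑ _i : Fin (n+1), (ν (Ioi (c*u)) * ν (Iic (D u))) :=
            Finset.sum_le_sum fun j _ => Finset.sum_le_sum fun i _ => hpair j i
        _ = ((n+1 : ℕ) : ENNReal)^2 * (ν (Ioi (c*u)) * ν (Iic (D u))) := by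
            rw [Finset.sum_const, Finset.sum_const, Finset.card_univ, Fintype.card_fin,
              smul_smul, nsmul_eq_mul]
            push_cast
            ring
    have hfin : ((n+1 : ℕ) : ENNReal)^2 * (ν (Ioi (c*u)) * ν (Iic (D u))) ≠ ⊤ :=
      ENNReal.mul_ne_top (ENNReal.pow_ne_top (ENNReal.natCast_ne_top _))
        (ENNReal.mul_ne_top (measure_ne_top _ _) (measure_ne_top _ _))
    have h6 := ENNReal.toReal_mono hfin hμ
    rw [ENNReal.toReal_mul, ENNReal.toReal_mul, ENNReal.toReal_pow,
      ENNReal.toReal_natCast] at h6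
    rw [cdf_eq_real, measureReal_def]
    push_cast at h6 ⊢
    exact h6
  -- limit of the tail ratio
  have hcb : (0:ℝ) < c * b 0 := mul_pos hc (hb 0)
  have hratio : Tendsto (fun u => T (c*u) / T (u / b 0)) atTop (nhds ((c * b 0) ^ (-θ))) := by
    have hx : Tendsto (fun u : ℝ => u / b 0) atTop atTop :=
      Tendsto.atTop_div_const (hb 0) tendsto_id
    have hφ : Tendsto (fun u : ℝ => L ((c * b 0) * (u / b 0)) / L (u / b 0)) atTop (nhds 1) :=
      (hsv (c * b 0) hcb).comp hx
    have hlim : Tendsto (fun u : ℝ => (c * b 0) ^ (-θ) * (L ((c * b 0) * (u / b 0)) / L (u / b 0)))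
        atTop (nhds ((c * b 0) ^ (-θ))) := by
      have h2 := (tendsto_const_nhds (x := (c * b 0) ^ (-θ)) (f := atTop (α := ℝ))).mul hφ
      rwa [mul_one] at h2
    apply Tendsto.congr' _ hlim
    filter_upwards [eventually_gt_atTop 0] with u hu
    have hx0 : 0 < u / b 0 := div_pos hu (hb 0)
    have hcu : 0 < c * u := mul_pos hc hu
    have hrw : c * u = (c * b 0) * (u / b 0) := by
      rw [mul_assoc, mul_comm (b 0) (u / b 0), div_mul_cancel₀ u (hb 0).ne']
    rw [hTform _ hcu, hTform _ hx0, hrw]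
    rw [Real.mul_rpow hcb.le hx0.le]
    have hLx : L (u / b 0) ≠ 0 := (hLpos _ hx0).ne'
    have hx0' : (u / b 0 : ℝ) ^ (-θ) ≠ 0 := (Real.rpow_pos_of_pos hx0 _).ne'
    field_simp
  -- D tends to -∞
  have hDlim : Tendsto D atTop atBot := by
    have h1 : Tendsto (fun u : ℝ => αm * (c * u)) atTop atTop := by
      have h2 := Tendsto.const_mul_atTop (mul_pos hαm hc) (tendsto_id (α := ℝ))
      apply h2.congr
      intro u
      simp [mul_assoc]
    have h2 : Tendsto (fun u : ℝ => l - αm * (c*u)) atTop atBot := by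
      have h3 := tendsto_atBot_add_const_left atTop l (tendsto_neg_atTop_atBot.comp h1)
      apply h3.congr
      intro u
      simp [sub_eq_add_neg]
    rw [hD']
    exact Tendsto.atBot_div_const hAm
      (Tendsto.atBot_div_const (by positivity : (0:ℝ) < (n:ℝ)) h2)
  have hcdf : Tendsto (fun u => cdf ν (D u)) atTop (nhds 0) := (tendsto_cdf_atBot ν).comp hDlim
  -- total bound tends to 0
  have hG : Tendsto (fun u => ((n:ℝ)+1)^2 * (T (c*u) * cdf ν (D u)) / (T (u / b 0) * T 1 ^ n))
      atTop (nhds 0) := by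
    have heq : ∀ u : ℝ, ((n:ℝ)+1)^2 * (T (c*u) * cdf ν (D u)) / (T (u / b 0) * T 1 ^ n)
        = (((n:ℝ)+1)^2 / T 1 ^ n) * (T (c*u) / T (u / b 0)) * cdf ν (D u) := by
      intro u
      field_simp
    have h1 := ((tendsto_const_nhds (x := ((n:ℝ)+1)^2 / T 1 ^ n)
      (f := atTop (α := ℝ))).mul hratio).mul hcdf
    rw [mul_zero] at h1
    exact h1.congr fun u => (heq u).symm
  -- squeeze
  refine squeeze_zero' ?_ ?_ hG
  · exact Eventually.of_forall fun u =>
      div_nonneg ENNReal.toReal_nonneg ENNReal.toReal_nonneg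
  · filter_upwards [eventually_ge_atTop u₀] with u hu
    have hu1 : (1:ℝ) ≤ u := le_trans (le_max_left _ _) hu
    have hub : 0 < T (u / b 0) * T 1 ^ n :=
      mul_pos (hTpos _ (div_pos (lt_of_lt_of_le one_pos hu1) (hb 0)))
        (pow_pos (hTpos 1 one_pos) n)
    have hcdfnn : 0 ≤ cdf ν (D u) := by
      rw [cdf_eq_real, measureReal_def]
      exact ENNReal.toReal_nonneg
    have hNnn : 0 ≤ ((n:ℝ)+1)^2 * (T (c*u) * cdf ν (D u)) :=
      mul_nonneg (by positivity) (mul_nonneg ENNReal.toReal_nonneg hcdfnn)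
    exact div_le_div₀ hNnn (hnum u hu) hub (hdenom u)
end

section
/- Let X and Y be independent random variables with Y ≥ 0 almost surely and P(Y > x) > 0 for all x. Suppose lim_{x→∞} P(X > x)/P(Y > x) = 0 and Y is regularly varying with tail index θ > 0. Then P(X + Y > u) ∼ P(Y > u) as u → ∞. -/
open MeasureTheory ProbabilityTheory Filter Set

lemma tailP_tendsto_one_atBot {Ω : Type*} [MeasurableSpace Ω] (μ : Measure Ω)
    [IsProbabilityMeasure μ] (X : Ω → ℝ) (hX : Measurable X) :
    Tendsto (fun t => tailP μ X t) atBot (nhds 1) := by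
  haveI : IsProbabilityMeasure (μ.map X) := Measure.isProbabilityMeasure_map hX.aemeasurable
  have key : ∀ t : ℝ, tailP μ X t = 1 - cdf (μ.map X) t := by
    intro t
    rw [cdf_eq_real, measureReal_def]
    have h1 : μ {ω | t < X ω} = (μ.map X) (Ioi t) := by
      rw [Measure.map_apply hX measurableSet_Ioi]; rfl
    have h2 : (μ.map X) (Ioi t) = 1 - (μ.map X) (Iic t) := by
      rw [← compl_Iic]
      exact prob_compl_eq_one_sub measurableSet_Iic
    rw [tailP, h1, h2, ENNReal.toReal_sub_of_le prob_le_one ENNReal.one_ne_top,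
      ENNReal.toReal_one]
  have h : Tendsto (fun t : ℝ => (1:ℝ) - cdf (μ.map X) t) atBot (nhds (1 - 0)) :=
    tendsto_const_nhds.sub (tendsto_cdf_atBot (μ.map X))
  simp only [sub_zero] at h
  exact h.congr (fun t => (key t).symm)

/-- tail equivalence of sums when one summand has negligible tail:
if Y ≥ 0 a.s. is regularly varying and P(X > x)/P(Y > x) → 0, then
P(X + Y > u) ∼ P(Y > u) as u → ∞. -/
theorem stmt_6 {Ω : Type*} [MeasurableSpace Ω] (μ : Measure Ω) [IsProbabilityMeasure μ]
    (X Y : Ω → ℝ) (hX : Measurable X) (hY : Measurable Y)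
    (hindep : IndepFun X Y μ)
    (hYnonneg : ∀ᵐ ω ∂μ, 0 ≤ Y ω)
    (hYpos : ∀ x : ℝ, 0 < μ {ω | x < Y ω})
    (hneg : Tendsto (fun x => tailP μ X x / tailP μ Y x) atTop (nhds 0))
    (θ : ℝ) (hθ : 0 < θ) (hYrv : RegVarying μ Y θ) :
    Tendsto (fun u => tailP μ (fun ω => X ω + Y ω) u / tailP μ Y u) atTop (nhds 1) := by
  obtain ⟨L, hL, hLrep⟩ := hYrv
  have htY : ∀ x : ℝ, 0 < tailP μ Y x :=
    fun x => ENNReal.toReal_pos (hYpos x).ne' (measure_ne_top μ _)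
  -- ratio limit for the regularly varying tail of Y
  have hratio : ∀ α : ℝ, 0 < α →
      Tendsto (fun u => tailP μ Y (α * u) / tailP μ Y u) atTop (nhds (α ^ (-θ))) := by
    intro α hα
    have h1 : Tendsto (fun u => α ^ (-θ) * (L (α * u) / L u)) atTop
        (nhds (α ^ (-θ) * 1)) := tendsto_const_nhds.mul (hL α hα)
    rw [mul_one] at h1
    refine h1.congr' ?_
    filter_upwards [eventually_gt_atTop 0] with u hu
    have hau : 0 < α * u := mul_pos hα hu
    have hLu : 0 < L u := by
      have h2 := htY u
      rw [hLrep u hu] at h2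
      have hup : (0:ℝ) < u ^ (-θ) := Real.rpow_pos_of_pos hu _
      nlinarith [hup, h2]
    have hut : (0:ℝ) < u ^ (-θ) := Real.rpow_pos_of_pos hu _
    rw [hLrep _ hau, hLrep u hu, Real.mul_rpow hα.le hu.le]
    field_simp
  -- independence on tail events
  have hind : ∀ a b : ℝ, μ ({ω | a < X ω} ∩ {ω | b < Y ω})
      = μ {ω | a < X ω} * μ {ω | b < Y ω} := by
    intro a b
    exact hindep.measure_inter_preimage_eq_mul _ _ measurableSet_Ioi measurableSet_Ioi
  -- lower bound
  have hlow : ∀ ε u : ℝ, tailP μ X (-(ε * u)) * tailP μ Y ((1 + ε) * u)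
      ≤ tailP μ (fun ω => X ω + Y ω) u := by
    intro ε u
    have hsub : {ω | -(ε * u) < X ω} ∩ {ω | (1 + ε) * u < Y ω}
        ⊆ {ω | u < X ω + Y ω} := by
      rintro ω ⟨h1, h2⟩
      simp only [mem_setOf_eq] at h1 h2 ⊢
      nlinarith
    calc tailP μ X (-(ε * u)) * tailP μ Y ((1 + ε) * u)
        = (μ ({ω | -(ε * u) < X ω} ∩ {ω | (1 + ε) * u < Y ω})).toReal := by
          rw [tailP, tailP, hind, ENNReal.toReal_mul]
      _ ≤ _ := ENNReal.toReal_mono (measure_ne_top μ _) (measure_mono hsub)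
  -- upper bound
  have hup : ∀ ε u : ℝ, tailP μ (fun ω => X ω + Y ω) u
      ≤ tailP μ X (ε * u) + tailP μ Y ((1 - ε) * u) := by
    intro ε u
    have hsub : {ω | u < X ω + Y ω} ⊆ {ω | ε * u < X ω} ∪ {ω | (1 - ε) * u < Y ω} := by
      intro ω h
      simp only [mem_setOf_eq, mem_union] at h ⊢
      by_contra hc
      push_neg at hc
      nlinarith [hc.1, hc.2]
    have hfin : μ {ω | ε * u < X ω} + μ {ω | (1 - ε) * u < Y ω} ≠ ⊤ :=
      ENNReal.add_ne_top.mpr ⟨measure_ne_top μ _, measure_ne_top μ _⟩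
    calc tailP μ (fun ω => X ω + Y ω) u
        ≤ (μ {ω | ε * u < X ω} + μ {ω | (1 - ε) * u < Y ω}).toReal :=
          ENNReal.toReal_mono hfin ((measure_mono hsub).trans (measure_union_le _ _))
      _ = tailP μ X (ε * u) + tailP μ Y ((1 - ε) * u) :=
          ENNReal.toReal_add (measure_ne_top μ _) (measure_ne_top μ _)
  -- main ε-δ argument
  rw [Metric.tendsto_nhds]
  intro δ hδ
  -- choose ε
  have hc1 : Tendsto (fun e : ℝ => (1 - e) ^ (-θ)) (nhds 0) (nhds 1) := by
    have h0 : Tendsto (fun e : ℝ => (1 : ℝ) - e) (nhds 0) (nhds 1) := by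
      have := (tendsto_const_nhds.sub tendsto_id : Tendsto (fun e : ℝ => (1:ℝ) - e)
        (nhds 0) (nhds (1 - 0)))
      simpa using this
    have hcont := (Real.continuousAt_rpow_const 1 (-θ) (Or.inl one_ne_zero)).tendsto
    have := hcont.comp h0
    simpa [Function.comp_def] using this
  have hc2 : Tendsto (fun e : ℝ => (1 + e) ^ (-θ)) (nhds 0) (nhds 1) := by
    have h0 : Tendsto (fun e : ℝ => (1 : ℝ) + e) (nhds 0) (nhds 1) := by
      have := (tendsto_const_nhds.add tendsto_id : Tendsto (fun e : ℝ => (1:ℝ) + e)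
        (nhds 0) (nhds (1 + 0)))
      simpa using this
    have hcont := (Real.continuousAt_rpow_const 1 (-θ) (Or.inl one_ne_zero)).tendsto
    have := hcont.comp h0
    simpa [Function.comp_def] using this
  have hev1 : ∀ᶠ e in nhds (0:ℝ), (1 - e) ^ (-θ) < 1 + δ/2 :=
    hc1.eventually (gt_mem_nhds (by linarith))
  have hev2 : ∀ᶠ e in nhds (0:ℝ), 1 - δ/2 < (1 + e) ^ (-θ) :=
    hc2.eventually (lt_mem_nhds (by linarith))
  have hev3 : ∀ᶠ e in nhds (0:ℝ), e < 1 := eventually_lt_nhds (by norm_num)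
  obtain ⟨ε, hεmem, hA, hB, hε1⟩ :
      ∃ ε : ℝ, ε ∈ Ioi (0:ℝ) ∧ (1 - ε) ^ (-θ) < 1 + δ/2 ∧ 1 - δ/2 < (1 + ε) ^ (-θ) ∧ ε < 1 := by
    have := ((hev1.and (hev2.and hev3)).filter_mono (nhdsWithin_le_nhds (s := Ioi (0:ℝ)))).and
      self_mem_nhdsWithin
    obtain ⟨ε, ⟨h1, h2, h3⟩, h4⟩ := this.exists
    exact ⟨ε, h4, h1, h2, h3⟩
  have hε : (0:ℝ) < ε := hεmem
  -- limit of the lower bound ratio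
  have hXone : Tendsto (fun u => tailP μ X (-(ε * u))) atTop (nhds 1) := by
    have hm : Tendsto (fun u : ℝ => -(ε * u)) atTop atBot :=
      tendsto_neg_atTop_atBot.comp (Tendsto.const_mul_atTop hε tendsto_id)
    exact (tailP_tendsto_one_atBot μ X hX).comp hm
  have hlowlim : Tendsto (fun u => tailP μ X (-(ε * u)) * (tailP μ Y ((1 + ε) * u) / tailP μ Y u))
      atTop (nhds (1 * (1 + ε) ^ (-θ))) := hXone.mul (hratio (1 + ε) (by linarith))
  rw [one_mul] at hlowlim
  -- limit of the upper bound ratio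
  have hsmall : Tendsto (fun u => tailP μ X (ε * u) / tailP μ Y u) atTop (nhds 0) := by
    have h1 : Tendsto (fun u => tailP μ X (ε * u) / tailP μ Y (ε * u)) atTop (nhds 0) :=
      hneg.comp (Tendsto.const_mul_atTop hε tendsto_id)
    have h2 := h1.mul (hratio ε hε)
    rw [zero_mul] at h2
    refine h2.congr (fun u => ?_)
    rw [div_mul_div_comm, mul_comm (tailP μ X (ε * u)) (tailP μ Y (ε * u)),
      mul_div_mul_left _ _ (htY (ε * u)).ne']
  have huplim : Tendsto (fun u => tailP μ X (ε * u) / tailP μ Y u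
      + tailP μ Y ((1 - ε) * u) / tailP μ Y u) atTop (nhds (0 + (1 - ε) ^ (-θ))) :=
    hsmall.add (hratio (1 - ε) (by linarith))
  rw [zero_add] at huplim
  -- conclude
  have hevlow : ∀ᶠ u in atTop,
      1 - δ < tailP μ X (-(ε * u)) * (tailP μ Y ((1 + ε) * u) / tailP μ Y u) :=
    hlowlim.eventually (lt_mem_nhds (by linarith))
  have hevup : ∀ᶠ u in atTop,
      tailP μ X (ε * u) / tailP μ Y u + tailP μ Y ((1 - ε) * u) / tailP μ Y u < 1 + δ :=
    huplim.eventually (gt_mem_nhds (by linarith))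
  filter_upwards [hevlow, hevup] with u h1 h2
  rw [Real.dist_eq, abs_sub_lt_iff]
  have hY0 := htY u
  have hlb : tailP μ X (-(ε * u)) * (tailP μ Y ((1 + ε) * u) / tailP μ Y u)
      ≤ tailP μ (fun ω => X ω + Y ω) u / tailP μ Y u := by
    rw [← mul_div_assoc]
    exact div_le_div_of_nonneg_right (hlow ε u) hY0.le
  have hub : tailP μ (fun ω => X ω + Y ω) u / tailP μ Y u
      ≤ tailP μ X (ε * u) / tailP μ Y u + tailP μ Y ((1 - ε) * u) / tailP μ Y u := by
    rw [← add_div]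
    exact div_le_div_of_nonneg_right (hup ε u) hY0.le
  constructor <;> linarith
end

section
/- Let (εₖ)_{k≥0} be iid non-negative regularly varying random variables with tail index θ > 0, and let (aₖ)_{k≥0} be constants with 0 ≤ aₖ ≤ γ cᵏ for some γ > 0 and 0 < c < 1. Then the series S = ∑_{k=0}^∞ aₖεₖ converges almost surely, and lim sup_{u→∞} P(S > u)/P(ε₀ > u) < ∞. -/
open MeasureTheory ProbabilityTheory Filter Set

lemma slow_bound {L : ℝ → ℝ} (hL : SlowlyVarying L) (hnn : ∀ x : ℝ, 0 < x → 0 ≤ L x)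
    {t η : ℝ} (ht : 1 < t) (hη : 0 < η) :
    ∃ x1 : ℝ, 1 ≤ x1 ∧ ∀ x, x1 ≤ x → 0 < L x ∧ L (t * x) ≤ (1 + η) * L x := by
  have h := hL t (lt_trans one_pos ht)
  have hev : ∀ᶠ x in atTop, L (t * x) / L x ∈ Set.Ioo (1/2 : ℝ) (1 + η) :=
    h.eventually (Ioo_mem_nhds (by norm_num) (by linarith))
  obtain ⟨x0, hx0⟩ := eventually_atTop.mp hev
  refine ⟨max x0 1, le_max_right _ _, fun x hx => ?_⟩
  have hx1 : (1:ℝ) ≤ x := le_trans (le_max_right _ _) hx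
  have hxpos : 0 < x := lt_of_lt_of_le one_pos hx1
  have hr := hx0 x (le_trans (le_max_left _ _) hx)
  have hLpos : 0 < L x := by
    rcases lt_or_eq_of_le (hnn x hxpos) with h' | h'
    · exact h'
    · exfalso; rw [← h'] at hr; simp at hr; linarith [hr.1]
  refine ⟨hLpos, ?_⟩
  have := hr.2
  calc L (t * x) = L (t * x) / L x * L x := by field_simp
    _ ≤ (1 + η) * L x := mul_le_mul_of_nonneg_right (le_of_lt this) hLpos.le

lemma slow_iter {L : ℝ → ℝ} {t η x1 : ℝ} (ht : 1 < t) (hx1 : 1 ≤ x1) (hη : 0 ≤ η)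
    (h : ∀ x, x1 ≤ x → 0 < L x ∧ L (t * x) ≤ (1 + η) * L x) :
    ∀ x, x1 ≤ x → ∀ k : ℕ, L (t ^ k * x) ≤ (1 + η) ^ k * L x := by
  intro x hx k
  induction k with
  | zero => simp
  | succ k ih =>
    have hxpos : 0 < x := lt_of_lt_of_le one_pos (le_trans hx1 hx)
    have htk : (1:ℝ) ≤ t ^ k := one_le_pow₀ (le_of_lt ht)
    have harg : x1 ≤ t ^ k * x := le_trans hx (le_mul_of_one_le_left hxpos.le htk)
    have step := (h _ harg).2
    have : L (t ^ (k+1) * x) = L (t * (t ^ k * x)) := by ring_nf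
    rw [this]
    calc L (t * (t ^ k * x)) ≤ (1 + η) * L (t ^ k * x) := step
      _ ≤ (1 + η) * ((1 + η) ^ k * L x) := by
          exact mul_le_mul_of_nonneg_left ih (by linarith)
      _ = (1 + η) ^ (k+1) * L x := by ring

lemma tail_est {Ω : Type*} [MeasurableSpace Ω] (μ : Measure Ω) [IsProbabilityMeasure μ]
    (X : Ω → ℝ) {θ : ℝ} (hθ : 0 < θ) (hrv : RegVarying μ X θ) {t β : ℝ} (ht : 1 < t) (hβ : 0 < β) :
    ∃ q D u0 : ℝ, 0 < q ∧ q < 1 ∧ 0 < D ∧ 1 ≤ u0 ∧ ∀ u, u0 ≤ u →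
      0 < tailP μ X u ∧ ∀ k : ℕ, tailP μ X (β * t ^ k * u) ≤ D * q ^ k * tailP μ X u := by
  obtain ⟨L, hSV, hrep⟩ := hrv
  have htpos : (0:ℝ) < t := lt_trans one_pos ht
  have hnn : ∀ x : ℝ, 0 < x → 0 ≤ L x := by
    intro x hx
    have h := hrep x hx
    have h0 : 0 ≤ tailP μ X x := ENNReal.toReal_nonneg
    have hxp : 0 < x ^ (-θ) := Real.rpow_pos_of_pos hx _
    nlinarith
  have htθ : 1 < t ^ θ :=
    (Real.one_lt_rpow_iff_of_pos htpos).mpr (Or.inl ⟨ht, hθ⟩)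
  set η := (t ^ θ - 1)/2 with hηdef
  have hη : 0 < η := by rw [hηdef]; linarith
  have htinv : t ^ (-θ) = (t ^ θ)⁻¹ := Real.rpow_neg htpos.le θ
  have htθinv : 0 < t ^ (-θ) := Real.rpow_pos_of_pos htpos _
  set q := (1 + η) * t ^ (-θ) with hqdef
  have hq0 : 0 < q := by positivity
  have hq1 : q < 1 := by
    rw [hqdef, htinv, mul_inv_lt_iff₀ (by linarith), one_mul, hηdef]; linarith
  obtain ⟨x1, hx11, hx1⟩ := slow_bound hSV hnn ht hη
  have hβev : ∀ᶠ u in atTop, L (β * u) / L u ∈ Set.Iio (2:ℝ) :=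
    (hSV β hβ).eventually (Iio_mem_nhds (by norm_num))
  obtain ⟨x2, hx2⟩ := eventually_atTop.mp hβev
  refine ⟨q, 2 * β ^ (-θ), max (max x1 x2) (max 1 (x1 / β)), hq0, hq1,
    by positivity, le_trans (le_max_left _ _) (le_max_right _ _), fun u hu => ?_⟩
  have h_u1 : (1:ℝ) ≤ u := le_trans (le_max_left _ _) (le_trans (le_max_right _ _) hu)
  have hupos : (0:ℝ) < u := lt_of_lt_of_le one_pos h_u1
  have h_ux1 : x1 ≤ u := le_trans (le_max_left _ _) (le_trans (le_max_left _ _) hu)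
  have h_ux2 : x2 ≤ u := le_trans (le_max_right _ _) (le_trans (le_max_left _ _) hu)
  have h_βu : x1 ≤ β * u := by
    have : x1 / β ≤ u := le_trans (le_max_right _ _) (le_trans (le_max_right _ _) hu)
    rw [div_le_iff₀ hβ] at this; linarith [this]
  have hLu : 0 < L u := (hx1 u h_ux1).1
  have hTu : tailP μ X u = u ^ (-θ) * L u := hrep u hupos
  have hupow : 0 < u ^ (-θ) := Real.rpow_pos_of_pos hupos _
  have hTupos : 0 < tailP μ X u := by rw [hTu]; positivity
  refine ⟨hTupos, fun k => ?_⟩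
  have htk : (0:ℝ) < t ^ k := pow_pos htpos k
  have hargpos : 0 < β * t ^ k * u := by positivity
  have hform : tailP μ X (β * t ^ k * u) = (β * t ^ k * u) ^ (-θ) * L (β * t ^ k * u) :=
    hrep _ hargpos
  have hLβu : L (β * u) ≤ 2 * L u := by
    have := hx2 u h_ux2
    simp only [Set.mem_Iio] at this
    have := (div_lt_iff₀ hLu).mp this
    linarith
  have hchain : L (β * t ^ k * u) ≤ (1 + η) ^ k * (2 * L u) := by
    have h1 : L (t ^ k * (β * u)) ≤ (1 + η) ^ k * L (β * u) :=
      slow_iter ht hx11 hη.le hx1 (β * u) h_βu k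
    have he : β * t ^ k * u = t ^ k * (β * u) := by ring
    rw [he]
    calc L (t ^ k * (β * u)) ≤ (1 + η) ^ k * L (β * u) := h1
      _ ≤ (1 + η) ^ k * (2 * L u) :=
          mul_le_mul_of_nonneg_left hLβu (pow_nonneg (by linarith) k)
  have hpowt : ((t:ℝ) ^ k) ^ (-θ) = (t ^ (-θ)) ^ k := by
    rw [← Real.rpow_natCast t k, ← Real.rpow_mul htpos.le,
      mul_comm ((k:ℕ):ℝ) (-θ), Real.rpow_mul htpos.le, Real.rpow_natCast]
  have hpow : (β * t ^ k * u) ^ (-θ) = β ^ (-θ) * (t ^ (-θ)) ^ k * u ^ (-θ) := by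
    rw [Real.mul_rpow (by positivity) hupos.le, Real.mul_rpow hβ.le htk.le, hpowt]
  have hApos : 0 ≤ (β * t ^ k * u) ^ (-θ) := le_of_lt (Real.rpow_pos_of_pos hargpos _)
  calc tailP μ X (β * t ^ k * u)
      = (β * t ^ k * u) ^ (-θ) * L (β * t ^ k * u) := hform
    _ ≤ (β * t ^ k * u) ^ (-θ) * ((1 + η) ^ k * (2 * L u)) :=
        mul_le_mul_of_nonneg_left hchain hApos
    _ = 2 * β ^ (-θ) * q ^ k * tailP μ X u := by
        rw [hpow, hTu, hqdef, mul_pow]; ring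


/-- for iid non-negative regularly varying (εₖ) and geometrically decaying
non-negative coefficients aₖ ≤ γ cᵏ, the series S = ∑ aₖεₖ converges a.s. and
limsup_u P(S > u)/P(ε₀ > u) < ∞. -/
theorem stmt_7 {Ω : Type*} [MeasurableSpace Ω] (μ : Measure Ω) [IsProbabilityMeasure μ]
    (ε : ℕ → Ω → ℝ) (hmeas : ∀ k, Measurable (ε k))
    (hindep : iIndepFun ε μ)
    (hident : ∀ k, Measure.map (ε k) μ = Measure.map (ε 0) μ)
    (hnonneg : ∀ k, ∀ᵐ ω ∂μ, 0 ≤ ε k ω)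
    (θ : ℝ) (hθ : 0 < θ) (hrv : RegVarying μ (ε 0) θ)
    (a : ℕ → ℝ) (γ c : ℝ) (hγ : 0 < γ) (hc0 : 0 < c) (hc1 : c < 1)
    (ha : ∀ k, 0 ≤ a k ∧ a k ≤ γ * c ^ k) :
    (∀ᵐ ω ∂μ, Summable (fun k => a k * ε k ω)) ∧
    ∃ M : ℝ, ∀ᶠ u in atTop,
      tailP μ (fun ω => ∑' k, a k * ε k ω) u / tailP μ (ε 0) u ≤ M := by
  -- constants
  set r : ℝ := (1 + c) / 2 with hrdef
  have hr0 : 0 < r := by rw [hrdef]; linarith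
  have hrc : c < r := by rw [hrdef]; linarith
  have hr1 : r < 1 := by rw [hrdef]; linarith
  set t : ℝ := r / c with htdef
  have ht : 1 < t := (one_lt_div hc0).mpr hrc
  set β : ℝ := (1 - r) / γ with hβdef
  have hβ : 0 < β := div_pos (by linarith) hγ
  have hprod : ∀ k : ℕ, γ * c ^ k * (β * t ^ k) = (1 - r) * r ^ k := by
    intro k
    rw [hβdef, htdef, div_pow]
    field_simp
  obtain ⟨q, D, u0, hq0, hq1, hD, hu01, hest⟩ := tail_est μ (ε 0) hθ hrv ht hβ
  -- identical tails
  have hident' : ∀ (k : ℕ) (s : ℝ), μ {ω | s < ε k ω} = μ {ω | s < ε 0 ω} := by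
    intro k s
    have h1 : {ω | s < ε k ω} = ε k ⁻¹' (Set.Ioi s) := rfl
    have h2 : {ω | s < ε 0 ω} = ε 0 ⁻¹' (Set.Ioi s) := rfl
    rw [h1, h2, ← Measure.map_apply (hmeas k) measurableSet_Ioi, hident k,
      Measure.map_apply (hmeas 0) measurableSet_Ioi]
  -- the good set
  set G : Set Ω := {ω | ∀ k, 0 ≤ ε k ω} with hGdef
  have hGc : μ Gᶜ = 0 := by
    have h := ae_all_iff.mpr hnonneg
    rw [ae_iff] at h
    convert h using 2
    rfl

  -- key measure bound
  have key : ∀ v, u0 ≤ v → ∀ k : ℕ,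
      μ {ω | (1 - r) * r ^ k * v < a k * ε k ω} ≤
        ENNReal.ofReal (D * q ^ k * tailP μ (ε 0) v) := by
    intro v hv k
    have hvpos : (0:ℝ) < v := lt_of_lt_of_le one_pos (le_trans hu01 hv)
    have hincl : {ω | (1 - r) * r ^ k * v < a k * ε k ω} ⊆
        Gᶜ ∪ {ω | β * t ^ k * v < ε k ω} := by
      intro ω hω
      by_contra hcon
      rw [Set.mem_union] at hcon
      push_neg at hcon
      obtain ⟨hωG, hωε⟩ := hcon
      rw [Set.notMem_compl_iff] at hωG
      simp only [Set.mem_setOf_eq, not_lt] at hωε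
      have hεnn : 0 ≤ ε k ω := hωG k
      have h1 : a k * ε k ω ≤ γ * c ^ k * ε k ω :=
        mul_le_mul_of_nonneg_right (ha k).2 hεnn
      have h2 : γ * c ^ k * ε k ω ≤ γ * c ^ k * (β * t ^ k * v) :=
        mul_le_mul_of_nonneg_left hωε (by positivity)
      have h3 : γ * c ^ k * (β * t ^ k * v) = (1 - r) * r ^ k * v := by
        rw [← mul_assoc, hprod k]
      simp only [Set.mem_setOf_eq] at hω
      linarith
    calc μ {ω | (1 - r) * r ^ k * v < a k * ε k ω}
        ≤ μ (Gᶜ ∪ {ω | β * t ^ k * v < ε k ω}) := measure_mono hincl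
      _ ≤ μ Gᶜ + μ {ω | β * t ^ k * v < ε k ω} := measure_union_le _ _
      _ = μ {ω | β * t ^ k * v < ε 0 ω} := by rw [hGc, zero_add, hident']
      _ = ENNReal.ofReal (tailP μ (ε 0) (β * t ^ k * v)) := by
          rw [tailP, ENNReal.ofReal_toReal (measure_ne_top μ _)]
      _ ≤ ENNReal.ofReal (D * q ^ k * tailP μ (ε 0) v) :=
          ENNReal.ofReal_le_ofReal ((hest v hv).2 k)
  have hT0 : 0 < tailP μ (ε 0) u0 := (hest u0 le_rfl).1
  -- geometric sums
  have hqsum : Summable fun k : ℕ => q ^ k := summable_geometric_of_lt_one hq0.le hq1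
  have hofsum : ∀ T : ℝ, 0 ≤ T →
      (∑' k : ℕ, ENNReal.ofReal (D * q ^ k * T)) = ENNReal.ofReal (D * T * (1 - q)⁻¹) := by
    intro T hTnn
    have hs : Summable fun k : ℕ => D * q ^ k * T := by
      have := hqsum.mul_left (D * T)
      exact this.congr (fun k => by ring)
    rw [← ENNReal.ofReal_tsum_of_nonneg (fun k => by positivity) hs]
    congr 1
    have : (fun k : ℕ => D * q ^ k * T) = fun k : ℕ => (D * T) * q ^ k := by
      funext k; ring
    rw [this, tsum_mul_left, tsum_geometric_of_lt_one hq0.le hq1]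
  constructor
  · -- a.s. summability via Borel–Cantelli
    set E : ℕ → Set Ω := fun k => {ω | (1 - r) * r ^ k * u0 < a k * ε k ω} with hEdef
    have hsum_ne : (∑' k, μ (E k)) ≠ ⊤ := by
      have hle : (∑' k, μ (E k)) ≤ ENNReal.ofReal (D * tailP μ (ε 0) u0 * (1 - q)⁻¹) := by
        refine le_trans (ENNReal.tsum_le_tsum (fun k => key u0 le_rfl k)) ?_
        rw [hofsum _ hT0.le]
      exact ne_top_of_le_ne_top ENNReal.ofReal_ne_top hle
    have hlims : μ (limsup E atTop) = 0 := measure_limsup_atTop_eq_zero hsum_ne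
    have hBC : ∀ᵐ ω ∂μ, ω ∉ limsup E atTop := by
      rw [ae_iff]
      simpa using hlims
    filter_upwards [hBC, ae_all_iff.mpr hnonneg] with ω hω hωnn
    rw [mem_limsup_iff_frequently_mem, Filter.not_frequently] at hω
    obtain ⟨N, hN⟩ := eventually_atTop.mp hω
    apply (summable_nat_add_iff N).mp
    refine Summable.of_nonneg_of_le (fun k => mul_nonneg (ha _).1 (hωnn _))
      (fun k => ?_) ((summable_geometric_of_lt_one hr0.le hr1).mul_left ((1 - r) * u0 * r ^ N))
    have h1 := hN (k + N) (Nat.le_add_left N k)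
    simp only [hEdef, Set.mem_setOf_eq, not_lt] at h1
    calc a (k + N) * ε (k + N) ω ≤ (1 - r) * r ^ (k + N) * u0 := h1
      _ = (1 - r) * u0 * r ^ N * r ^ k := by rw [pow_add]; ring
  · -- tail ratio bound
    refine ⟨D * (1 - q)⁻¹, eventually_atTop.mpr ⟨u0, fun u hu => ?_⟩⟩
    have hupos : (0:ℝ) < u := lt_of_lt_of_le one_pos (le_trans hu01 hu)
    set T := tailP μ (ε 0) u with hTdef
    have hT : 0 < T := (hest u hu).1
    set S : Ω → ℝ := fun ω => ∑' k, a k * ε k ω with hSdef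
    have hincl : {ω | u < S ω} ⊆
        Gᶜ ∪ ⋃ k, {ω | (1 - r) * r ^ k * u < a k * ε k ω} := by
      intro ω hω
      by_contra hcon
      rw [Set.mem_union] at hcon
      push_neg at hcon
      obtain ⟨hωG, hωE⟩ := hcon
      rw [Set.notMem_compl_iff] at hωG
      rw [Set.mem_iUnion] at hωE
      push_neg at hωE
      have hfle : ∀ k : ℕ, a k * ε k ω ≤ ((1 - r) * u) * r ^ k := by
        intro k
        have := hωE k
        simp only [Set.mem_setOf_eq, not_lt] at this
        calc a k * ε k ω ≤ (1 - r) * r ^ k * u := this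
          _ = ((1 - r) * u) * r ^ k := by ring
      have hg : Summable fun k : ℕ => ((1 - r) * u) * r ^ k :=
        (summable_geometric_of_lt_one hr0.le hr1).mul_left _
      have hf : Summable fun k : ℕ => a k * ε k ω :=
        Summable.of_nonneg_of_le (fun k => mul_nonneg (ha _).1 (hωG _)) hfle hg
      have htsum : S ω ≤ ∑' k : ℕ, ((1 - r) * u) * r ^ k :=
        Summable.tsum_le_tsum hfle hf hg
      rw [tsum_mul_left, tsum_geometric_of_lt_one hr0.le hr1] at htsum
      have h1r : (1:ℝ) - r ≠ 0 := by linarith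
      have heq : (1 - r) * u * (1 - r)⁻¹ = u := by field_simp
      rw [heq] at htsum
      simp only [Set.mem_setOf_eq] at hω
      linarith
    have hmeasb : μ {ω | u < S ω} ≤ ENNReal.ofReal (D * T * (1 - q)⁻¹) := by
      calc μ {ω | u < S ω}
          ≤ μ (Gᶜ ∪ ⋃ k, {ω | (1 - r) * r ^ k * u < a k * ε k ω}) := measure_mono hincl
        _ ≤ μ Gᶜ + μ (⋃ k, {ω | (1 - r) * r ^ k * u < a k * ε k ω}) := measure_union_le _ _
        _ = μ (⋃ k, {ω | (1 - r) * r ^ k * u < a k * ε k ω}) := by rw [hGc, zero_add]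
        _ ≤ ∑' k, μ {ω | (1 - r) * r ^ k * u < a k * ε k ω} := measure_iUnion_le _
        _ ≤ ∑' k, ENNReal.ofReal (D * q ^ k * T) :=
            ENNReal.tsum_le_tsum (fun k => key u hu k)
        _ = ENNReal.ofReal (D * T * (1 - q)⁻¹) := hofsum T hT.le
    have hreal : tailP μ S u ≤ D * T * (1 - q)⁻¹ := by
      have := ENNReal.toReal_mono ENNReal.ofReal_ne_top hmeasb
      have hq1' : (0:ℝ) < 1 - q := by linarith
      rwa [ENNReal.toReal_ofReal (by positivity)] at this
    rw [div_le_iff₀ hT]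
    calc tailP μ S u ≤ D * T * (1 - q)⁻¹ := hreal
      _ = D * (1 - q)⁻¹ * T := by ring
end

section
/- Let X and Y be continuous real random variables (with distribution functions F_X, F_Y) whose supports contain a neighborhood of +∞. Then lim_{u→1⁻} E[F_Y(Y) ∣ F_X(X) > u] = 1 if and only if for every λ ∈ ℝ, lim_{v→∞} P(Y > λ ∣ X > v) = 1. -/
open MeasureTheory ProbabilityTheory Filter Set

open Topology



section Aux
variable {Ω : Type*} [MeasurableSpace Ω] (μ : Measure Ω) [IsProbabilityMeasure μ] (X : Ω → ℝ)

lemma cdfR_mono : Monotone (cdfR μ X) := fun a b hab =>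
  ENNReal.toReal_mono (measure_ne_top μ _) (measure_mono fun ω h => le_trans h hab)

lemma cdfR_nonneg (t : ℝ) : 0 ≤ cdfR μ X t := ENNReal.toReal_nonneg

lemma preim_Iic (t : ℝ) : X ⁻¹' (Iic t) = {ω | X ω ≤ t} := rfl

lemma cdfR_eq_cdf (hX : Measurable X) (t : ℝ) : cdfR μ X t = cdf (μ.map X) t := by
  have : IsProbabilityMeasure (μ.map X) := Measure.isProbabilityMeasure_map hX.aemeasurable
  rw [cdf_eq_real, measureReal_def, Measure.map_apply hX measurableSet_Iic, preim_Iic]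
  rfl

lemma tailP_eq' (hX : Measurable X) (v : ℝ) :
    (μ {ω | v < X ω}).toReal = 1 - cdfR μ X v := by
  have h : {ω | v < X ω} = {ω | X ω ≤ v}ᶜ := by ext ω; simp
  have hm : MeasurableSet {ω : Ω | X ω ≤ v} := hX measurableSet_Iic
  rw [h, measure_compl hm (measure_ne_top μ _), measure_univ,
    ENNReal.toReal_sub_of_le prob_le_one ENNReal.one_ne_top, ENNReal.toReal_one]
  rfl

lemma cdfR_le_one (t : ℝ) : cdfR μ X t ≤ 1 := by
  have := ENNReal.toReal_mono ENNReal.one_ne_top (prob_le_one (μ := μ) (s := {ω | X ω ≤ t}))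
  unfold cdfR; simpa using this

lemma cdfR_lt_one (hX : Measurable X) (hXsupp : ∀ v : ℝ, 0 < μ {ω | v < X ω}) (v : ℝ) :
    cdfR μ X v < 1 := by
  have h := tailP_eq' μ X hX v
  have hpos : 0 < (μ {ω | v < X ω}).toReal :=
    ENNReal.toReal_pos (hXsupp v).ne' (measure_ne_top μ _)
  linarith

lemma tendsto_cdfR_atTop (hX : Measurable X) : Tendsto (cdfR μ X) atTop (𝓝 1) := by
  have : IsProbabilityMeasure (μ.map X) := Measure.isProbabilityMeasure_map hX.aemeasurable
  exact (tendsto_cdf_atTop (μ.map X)).congr fun t => (cdfR_eq_cdf μ X hX t).symm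

lemma tendsto_cdfR_atBot (hX : Measurable X) : Tendsto (cdfR μ X) atBot (𝓝 0) := by
  have : IsProbabilityMeasure (μ.map X) := Measure.isProbabilityMeasure_map hX.aemeasurable
  exact (tendsto_cdf_atBot (μ.map X)).congr fun t => (cdfR_eq_cdf μ X hX t).symm

lemma continuous_cdfR (hX : Measurable X) (hXcont : ∀ c : ℝ, μ {ω | X ω = c} = 0) :
    Continuous (cdfR μ X) := by
  have hprob : IsProbabilityMeasure (μ.map X) := Measure.isProbabilityMeasure_map hX.aemeasurable
  have key : Continuous (cdf (μ.map X)) := by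
    rw [continuous_iff_continuousAt]
    intro a
    have hmono : Monotone (cdf (μ.map X)) := monotone_cdf _
    rw [hmono.continuousAt_iff_leftLim_eq_rightLim]
    have h1 : Function.rightLim (cdf (μ.map X)) a = cdf (μ.map X) a :=
      (cdf (μ.map X)).rightLim_eq a
    have h2 : (μ.map X) {a} = 0 := by
      rw [Measure.map_apply hX (measurableSet_singleton a)]
      exact hXcont a
    have h3 := (cdf (μ.map X)).measure_singleton a
    rw [measure_cdf, h2] at h3
    have h4 : cdf (μ.map X) a - Function.leftLim (cdf (μ.map X)) a ≤ 0 :=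
      ENNReal.ofReal_eq_zero.1 h3.symm
    have h5 : Function.leftLim (cdf (μ.map X)) a ≤ cdf (μ.map X) a := hmono.leftLim_le le_rfl
    rw [h1]
    linarith
  have : cdfR μ X = fun t => cdf (μ.map X) t := funext (cdfR_eq_cdf μ X hX)
  rw [this]
  exact key

end Aux
section Aux2
variable {Ω : Type*} [MeasurableSpace Ω] (μ : Measure Ω) [IsProbabilityMeasure μ] (X : Ω → ℝ)

lemma cdfR_level_null (hX : Measurable X) (hXcont : ∀ c : ℝ, μ {ω | X ω = c} = 0)
    {c : ℝ} (hc : c < 1) : μ {ω | cdfR μ X (X ω) = c} = 0 := by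
  have hcont : Continuous (cdfR μ X) := continuous_cdfR μ X hX hXcont
  have hmono : Monotone (cdfR μ X) := cdfR_mono μ X
  set F := cdfR μ X with hF
  set T := {t : ℝ | F t = c} with hT
  have hev : {ω | F (X ω) = c} = X ⁻¹' T := rfl
  have hTclosed : IsClosed T := by
    have : T = F ⁻¹' {c} := by ext t; simp [hT]
    rw [this]
    exact isClosed_singleton.preimage hcont
  rcases eq_empty_or_nonempty T with hTe | hTne
  · rw [hev, hTe]; simp
  obtain ⟨b, hb⟩ : ∃ b, c < F b := ((tendsto_order.1 (tendsto_cdfR_atTop μ X hX)).1 c hc).exists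
  have hTb : BddAbove T := by
    refine ⟨b, fun t ht => ?_⟩
    by_contra hlt
    push_neg at hlt
    have : F b ≤ F t := hmono hlt.le
    rw [ht] at this
    exact absurd hb (not_lt.2 this)
  set s := sSup T with hs
  have hsT : s ∈ T := hTclosed.closure_eq ▸ csSup_mem_closure hTne hTb
  by_cases hTbb : BddBelow T
  · set i := sInf T with hi
    have hiT : i ∈ T := hTclosed.closure_eq ▸ csInf_mem_closure hTne hTbb
    have hle : i ≤ s := csInf_le_csSup hTne hTbb hTb
    have hIici : X ⁻¹' Iic i = {ω | X ω ≤ i} := rfl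
    have hIics : X ⁻¹' Iic s = {ω | X ω ≤ s} := rfl
    have hIci : μ (X ⁻¹' Iic i) = μ (X ⁻¹' Iic s) := by
      apply (ENNReal.toReal_eq_toReal_iff' (measure_ne_top μ _) (measure_ne_top μ _)).1
      show F i = F s
      rw [hiT, hsT]
    have hunion : X ⁻¹' Iic s = X ⁻¹' Iic i ∪ X ⁻¹' Ioc i s := by
      rw [← preimage_union, Iic_union_Ioc_eq_Iic hle]
    have hdisj : Disjoint (X ⁻¹' Iic i) (X ⁻¹' Ioc i s) :=
      (Iic_disjoint_Ioc le_rfl).preimage X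
    have hadd : μ (X ⁻¹' Iic i) + μ (X ⁻¹' Ioc i s) = μ (X ⁻¹' Iic s) := by
      rw [hunion, measure_union hdisj (hX measurableSet_Ioc)]
    rw [← hIci] at hadd
    have hIoc : μ (X ⁻¹' Ioc i s) = 0 := by
      have := hadd
      nth_rewrite 2 [← add_zero (μ (X ⁻¹' Iic i))] at this
      exact (ENNReal.add_right_inj (measure_ne_top μ _)).1 this
    have hsub : X ⁻¹' T ⊆ {ω | X ω = i} ∪ X ⁻¹' Ioc i s := by
      intro ω hω
      have h1 : i ≤ X ω := csInf_le hTbb hω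
      have h2 : X ω ≤ s := le_csSup hTb hω
      rcases eq_or_lt_of_le h1 with h | h
      · exact Or.inl h.symm
      · exact Or.inr ⟨h, h2⟩
    rw [hev]
    exact measure_mono_null hsub (measure_union_null (hXcont i) hIoc)
  · have hc0 : c = 0 := by
      have h1 : ∀ m : ℝ, c ≤ F m := by
        intro m
        rw [not_bddBelow_iff] at hTbb
        obtain ⟨t, htT, htm⟩ := hTbb m
        have : F t ≤ F m := hmono htm.le
        rwa [htT] at this
      have h2 : c ≤ 0 := ge_of_tendsto' (tendsto_cdfR_atBot μ X hX) h1
      have h3 : 0 ≤ c := hsT ▸ cdfR_nonneg μ X s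
      linarith
    have hsub : X ⁻¹' T ⊆ {ω | X ω ≤ s} := fun ω hω => le_csSup hTb hω
    have hz : μ {ω | X ω ≤ s} = 0 := by
      have h4 : (μ {ω | X ω ≤ s}).toReal = 0 := by
        have : F s = c := hsT
        rw [hc0] at this
        exact this
      rwa [ENNReal.toReal_eq_zero_iff, or_iff_left (measure_ne_top μ _)] at h4
    rw [hev]
    exact measure_mono_null hsub hz

lemma event_ae_eq (hX : Measurable X) (hXcont : ∀ c : ℝ, μ {ω | X ω = c} = 0)
    (hXsupp : ∀ v : ℝ, 0 < μ {ω | v < X ω}) (v : ℝ) :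
    {ω | cdfR μ X v < cdfR μ X (X ω)} =ᵐ[μ] {ω | v < X ω} := by
  have hmono : Monotone (cdfR μ X) := cdfR_mono μ X
  have hsub : {ω | cdfR μ X v < cdfR μ X (X ω)} ⊆ {ω | v < X ω} := fun ω h =>
    lt_of_not_ge fun hle => not_le.2 h (hmono hle)
  rw [MeasureTheory.ae_eq_set]
  constructor
  · rw [Set.diff_eq_empty.2 hsub]; exact measure_empty
  · refine measure_mono_null (t := {ω | cdfR μ X (X ω) = cdfR μ X v}) ?_
      (cdfR_level_null μ X hX hXcont (cdfR_lt_one μ X hX hXsupp v))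
    rintro ω ⟨h1, h2⟩
    simp only [mem_setOf_eq, not_lt] at h2 ⊢
    exact le_antisymm h2 (hmono (le_of_lt h1))

end Aux2
section Aux3
variable {Ω : Type*} [MeasurableSpace Ω] (μ : Measure Ω) [IsProbabilityMeasure μ] (Y : Ω → ℝ)

lemma condE_congr (g : Ω → ℝ) {s t : Set Ω} (h : s =ᵐ[μ] t) : condE μ s g = condE μ t g := by
  unfold condE
  rw [setIntegral_congr_set h, measure_congr h]

lemma condP_nonneg (A B : Set Ω) : 0 ≤ condP μ A B :=
  div_nonneg ENNReal.toReal_nonneg ENNReal.toReal_nonneg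

lemma condP_le_one (A B : Set Ω) : condP μ A B ≤ 1 := by
  unfold condP
  rcases eq_or_ne (μ B).toReal 0 with h | h
  · rw [h, div_zero]; norm_num
  · rw [div_le_one (lt_of_le_of_ne ENNReal.toReal_nonneg (Ne.symm h))]
    exact ENNReal.toReal_mono (measure_ne_top μ _) (measure_mono inter_subset_right)

lemma g_int (hY : Measurable Y) : Integrable (fun ω => cdfR μ Y (Y ω)) μ := by
  refine (integrable_const (1 : ℝ)).mono'
    (((cdfR_mono μ Y).measurable.comp hY).aestronglyMeasurable) (ae_of_all _ fun ω => ?_)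
  rw [Real.norm_eq_abs, abs_of_nonneg (cdfR_nonneg μ Y _)]
  exact cdfR_le_one μ Y _

lemma condE_le_one (hY : Measurable Y) {B : Set Ω} (hB : MeasurableSet B) (hBpos : 0 < μ B) :
    condE μ B (fun ω => cdfR μ Y (Y ω)) ≤ 1 := by
  have hb : 0 < (μ B).toReal := ENNReal.toReal_pos hBpos.ne' (measure_ne_top μ _)
  unfold condE
  rw [div_le_one hb]
  calc ∫ ω in B, cdfR μ Y (Y ω) ∂μ ≤ ∫ _ in B, (1 : ℝ) ∂μ := by
        refine setIntegral_mono_on ((g_int μ Y hY).integrableOn)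
          (integrableOn_const (measure_ne_top μ B)) hB fun ω _ => cdfR_le_one μ Y _
    _ = (μ B).toReal := by rw [setIntegral_const]; simp; rfl

lemma condE_lower (hY : Measurable Y) {B : Set Ω} (hB : MeasurableSet B) (hBpos : 0 < μ B) (l : ℝ) :
    cdfR μ Y l * condP μ {ω | l < Y ω} B ≤ condE μ B (fun ω => cdfR μ Y (Y ω)) := by
  have hb : 0 < (μ B).toReal := ENNReal.toReal_pos hBpos.ne' (measure_ne_top μ _)
  set A : Set Ω := {ω | l < Y ω} with hA
  have hAm : MeasurableSet A := hY measurableSet_Ioi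
  have hkey : ∫ ω in B, A.indicator (fun _ => cdfR μ Y l) ω ∂μ
      = cdfR μ Y l * (μ (A ∩ B)).toReal := by
    rw [setIntegral_indicator hAm, setIntegral_const, inter_comm B A]
    rw [smul_eq_mul, mul_comm]
    rfl
  have hle : ∫ ω in B, A.indicator (fun _ => cdfR μ Y l) ω ∂μ
      ≤ ∫ ω in B, cdfR μ Y (Y ω) ∂μ := by
    refine setIntegral_mono_on
      (((integrable_const (cdfR μ Y l)).indicator hAm).integrableOn)
      ((g_int μ Y hY).integrableOn) hB fun ω _ => ?_
    by_cases hω : ω ∈ A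
    · rw [indicator_of_mem hω]
      exact cdfR_mono μ Y (le_of_lt hω)
    · rw [indicator_of_notMem hω]
      exact cdfR_nonneg μ Y _
  rw [hkey] at hle
  unfold condE condP
  rw [← mul_div_assoc]
  gcongr
end Aux3
section Aux4
variable {Ω : Type*} [MeasurableSpace Ω] (μ : Measure Ω) [IsProbabilityMeasure μ] (Y : Ω → ℝ)

lemma condE_upper (hY : Measurable Y) {B : Set Ω} (hB : MeasurableSet B) (hBpos : 0 < μ B)
    (l : ℝ) :
    condE μ B (fun ω => cdfR μ Y (Y ω))
      ≤ cdfR μ Y l + (1 - cdfR μ Y l) * condP μ {ω | l < Y ω} B := by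
  have hb : 0 < (μ B).toReal := ENNReal.toReal_pos hBpos.ne' (measure_ne_top μ _)
  set A : Set Ω := {ω | l < Y ω} with hA
  have hAm : MeasurableSet A := hY measurableSet_Ioi
  set cl := cdfR μ Y l with hcl
  have hle : ∫ ω in B, cdfR μ Y (Y ω) ∂μ
      ≤ ∫ ω in B, (cl + A.indicator (fun _ => 1 - cl) ω) ∂μ := by
    refine setIntegral_mono_on ((g_int μ Y hY).integrableOn)
      ((integrableOn_const (measure_ne_top μ B)).add
        (((integrable_const (1 - cl)).indicator hAm).integrableOn)) hB fun ω _ => ?_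
    by_cases hω : ω ∈ A
    · rw [indicator_of_mem hω]
      have := cdfR_le_one μ Y (Y ω)
      linarith
    · rw [indicator_of_notMem hω, add_zero]
      have hYl : Y ω ≤ l := not_lt.1 hω
      exact cdfR_mono μ Y hYl
  have hval : ∫ ω in B, (cl + A.indicator (fun _ => 1 - cl) ω) ∂μ
      = cl * (μ B).toReal + (1 - cl) * (μ (A ∩ B)).toReal := by
    rw [integral_add (integrableOn_const (C := cl) (measure_ne_top μ B))
      (((integrable_const (1 - cl)).indicator hAm).integrableOn),
      setIntegral_const, setIntegral_indicator hAm, setIntegral_const, inter_comm B A]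
    simp [mul_comm, measureReal_def]
  rw [hval] at hle
  unfold condE condP
  rw [div_le_iff₀ hb]
  calc ∫ ω in B, cdfR μ Y (Y ω) ∂μ ≤ cl * (μ B).toReal + (1 - cl) * (μ (A ∩ B)).toReal := hle
    _ = (cl + (1 - cl) * ((μ (A ∩ B)).toReal / (μ B).toReal)) * (μ B).toReal := by
        field_simp
end Aux4

/-- for continuous X, Y with supports containing a neighborhood of +∞,
lim_{u→1⁻} E[F_Y(Y) | F_X(X) > u] = 1 iff for every λ,
lim_{v→∞} P(Y > λ | X > v) = 1. -/
theorem stmt_9 {Ω : Type*} [MeasurableSpace Ω] (μ : Measure Ω) [IsProbabilityMeasure μ]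
    (X Y : Ω → ℝ) (hX : Measurable X) (hY : Measurable Y)
    (hXcont : ∀ c : ℝ, μ {ω | X ω = c} = 0)
    (hYcont : ∀ c : ℝ, μ {ω | Y ω = c} = 0)
    (hXsupp : ∀ v : ℝ, 0 < μ {ω | v < X ω})
    (hYsupp : ∀ v : ℝ, 0 < μ {ω | v < Y ω}) :
    Tendsto (fun u => condE μ {ω | u < cdfR μ X (X ω)} (fun ω => cdfR μ Y (Y ω)))
        (nhdsWithin 1 (Set.Iio 1)) (nhds 1)
      ↔ ∀ l : ℝ, Tendsto (fun v => condP μ {ω | l < Y ω} {ω | v < X ω}) atTop (nhds 1) := by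
  constructor
  · intro hL l
    rw [Metric.tendsto_atTop]
    intro ε hε
    have hcl : cdfR μ Y l < 1 := cdfR_lt_one μ Y hY hYsupp l
    set c := 1 - cdfR μ Y l with hc
    have hcpos : 0 < c := by simp only [hc]; linarith
    rw [Metric.tendsto_nhdsWithin_nhds] at hL
    obtain ⟨δ, hδpos, hδ⟩ := hL (ε * c) (mul_pos hε hcpos)
    obtain ⟨N, hN⟩ := Metric.tendsto_atTop.1 (tendsto_cdfR_atTop μ X hX) δ hδpos
    refine ⟨N, fun v hv => ?_⟩
    have hu1 : cdfR μ X v < 1 := cdfR_lt_one μ X hX hXsupp v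
    have h1 := hδ (mem_Iio.2 hu1) (hN v hv)
    have heq := condE_congr μ (fun ω => cdfR μ Y (Y ω)) (event_ae_eq μ X hX hXcont hXsupp v)
    rw [heq] at h1
    have hBm : MeasurableSet {ω | v < X ω} := hX measurableSet_Ioi
    have hBpos := hXsupp v
    set p := condP μ {ω | l < Y ω} {ω | v < X ω} with hp
    have hup := condE_upper μ Y hY hBm hBpos l
    rw [← hp] at hup
    have h2 : 1 - ε * c < condE μ {ω | v < X ω} (fun ω => cdfR μ Y (Y ω)) := by
      rw [Real.dist_eq] at h1
      have := abs_lt.1 h1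
      linarith [this.1]
    have hple : p ≤ 1 := condP_le_one μ _ _
    have h3 : c * (1 - p) < c * ε := by
      have hcl' : cdfR μ Y l = 1 - c := by simp [hc]
      rw [hcl'] at hup
      nlinarith
    have h4 : 1 - p < ε := by
      have := (mul_lt_mul_iff_right₀ hcpos).1 h3
      linarith
    rw [Real.dist_eq, abs_lt]
    constructor
    · linarith
    · linarith
  · intro hR
    rw [Metric.tendsto_nhdsWithin_nhds]
    intro ε hε
    set a := min (ε / 4) (1 / 4) with ha
    have hapos : 0 < a := lt_min (by linarith) (by norm_num)
    have ha1 : a ≤ 1 / 4 := min_le_right _ _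
    have haε : a ≤ ε / 4 := min_le_left _ _
    obtain ⟨l, hl⟩ : ∃ l, 1 - a < cdfR μ Y l :=
      ((tendsto_order.1 (tendsto_cdfR_atTop μ Y hY)).1 (1 - a) (by linarith)).exists
    obtain ⟨N, hN⟩ := Metric.tendsto_atTop.1 (hR l) a hapos
    have hδpos : 0 < 1 - cdfR μ X N := by linarith [cdfR_lt_one μ X hX hXsupp N]
    refine ⟨1 - cdfR μ X N, hδpos, fun {u} hu hdist => ?_⟩
    have hu1 : u < 1 := mem_Iio.1 hu
    have huN : cdfR μ X N < u := by
      rw [Real.dist_eq] at hdist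
      have := abs_lt.1 hdist
      linarith [this.1]
    obtain ⟨b, hb⟩ : ∃ b, u < cdfR μ X b :=
      ((tendsto_order.1 (tendsto_cdfR_atTop μ X hX)).1 u hu1).exists
    have hNb : N ≤ max b N := le_max_right _ _
    have hub' : u ≤ cdfR μ X (max b N) :=
      le_of_lt (lt_of_lt_of_le hb (cdfR_mono μ X (le_max_left b N)))
    obtain ⟨v, hvmem, hvu⟩ := intermediate_value_Icc hNb
      ((continuous_cdfR μ X hX hXcont).continuousOn) ⟨le_of_lt huN, hub'⟩
    have hvN : N ≤ v := hvmem.1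
    have heq : condE μ {ω | u < cdfR μ X (X ω)} (fun ω => cdfR μ Y (Y ω))
        = condE μ {ω | v < X ω} (fun ω => cdfR μ Y (Y ω)) := by
      rw [← hvu]
      exact condE_congr μ _ (event_ae_eq μ X hX hXcont hXsupp v)
    simp only [heq]
    have hBm : MeasurableSet {ω | v < X ω} := hX measurableSet_Ioi
    have hBpos := hXsupp v
    have hup := condE_le_one μ Y hY hBm hBpos
    have hlow := condE_lower μ Y hY hBm hBpos l
    have hpgt : 1 - a < condP μ {ω | l < Y ω} {ω | v < X ω} := by
      have h5 := hN v hvN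
      rw [Real.dist_eq] at h5
      have := abs_lt.1 h5
      linarith [this.1]
    have hpge : 0 ≤ condP μ {ω | l < Y ω} {ω | v < X ω} := condP_nonneg μ _ _
    have h1a : (0 : ℝ) ≤ 1 - a := by linarith
    have hmul : (1 - a) * (1 - a) ≤ cdfR μ Y l * condP μ {ω | l < Y ω} {ω | v < X ω} :=
      mul_le_mul (le_of_lt hl) (le_of_lt hpgt) h1a (cdfR_nonneg μ Y l)
    have hsq : (0 : ℝ) ≤ a * a := mul_nonneg (le_of_lt hapos) (le_of_lt hapos)
    have hexp : (1 - a) * (1 - a) = 1 - 2 * a + a * a := by ring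
    rw [Real.dist_eq, abs_lt]
    constructor
    · linarith
    · linarith
end

section
/- Let ε, Z, X be random variables with ε and Z independent, Z ≥ 0 a.s., ε regularly varying with tail index θ > 0, and suppose lim_{v→∞} P(Z > v)/P(ε > v) = c ∈ [0, ∞). Let λ ∈ ℝ be such that p := P(X > λ) < 1, and assume X is independent of ε. Then lim sup_{v→∞} P(X > λ ∣ ε + Z > v) ≤ (p + c)/(1 + c) < 1. -/
open MeasureTheory ProbabilityTheory Filter Set

section Aux

lemma sv_event_ne (L : ℝ → ℝ) (hL : SlowlyVarying L) : ∀ᶠ x in atTop, L x ≠ 0 := by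
  have h1 := hL 1 one_pos
  simp only [one_mul] at h1
  have := h1 (Metric.ball_mem_nhds (1:ℝ) one_pos)
  filter_upwards [this] with x hx
  intro h0
  have hx' : |L x / L x - 1| < 1 := by simpa [Metric.mem_ball, Real.dist_eq] using hx
  rw [h0] at hx'
  norm_num at hx'

lemma rv_event_pos {Ω : Type*} [MeasurableSpace Ω] (μ : Measure Ω) (ε : Ω → ℝ) (θ : ℝ)
    (hrv : RegVarying μ ε θ) : ∀ᶠ v in atTop, 0 < tailP μ ε v := by
  obtain ⟨L, hL, hrep⟩ := hrv
  filter_upwards [sv_event_ne L hL, eventually_gt_atTop 0] with v hv h0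
  have h := hrep v h0
  have : tailP μ ε v ≠ 0 := by
    rw [h]
    exact mul_ne_zero (ne_of_gt (Real.rpow_pos_of_pos h0 _)) hv
  exact lt_of_le_of_ne ENNReal.toReal_nonneg (Ne.symm this)

-- ratio lemma
lemma rv_ratio {Ω : Type*} [MeasurableSpace Ω] (μ : Measure Ω) (ε : Ω → ℝ) (θ : ℝ)
    (hrv : RegVarying μ ε θ) (α : ℝ) (hα : 0 < α) :
    Tendsto (fun v => tailP μ ε (α * v) / tailP μ ε v) atTop (nhds (α ^ (-θ))) := by
  obtain ⟨L, hL, hrep⟩ := hrv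
  have key : ∀ᶠ v in atTop, tailP μ ε (α * v) / tailP μ ε v = α ^ (-θ) * (L (α * v) / L v) := by
    filter_upwards [eventually_gt_atTop 0] with v hv
    rw [hrep v hv, hrep (α * v) (mul_pos hα hv),
      Real.mul_rpow hα.le hv.le]
    rw [mul_assoc, mul_div_assoc, mul_div_mul_left _ _ (ne_of_gt (Real.rpow_pos_of_pos hv _))]
  have hlim : Tendsto (fun v => α ^ (-θ) * (L (α * v) / L v)) atTop (nhds (α ^ (-θ) * 1)) :=
    (hL α hα).const_mul _
  rw [mul_one] at hlim
  exact hlim.congr' (key.mono fun v hv => hv.symm)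

variable {Ω : Type*} [MeasurableSpace Ω] (μ : Measure Ω) [IsProbabilityMeasure μ]

lemma indep_tail_mul {W V : Ω → ℝ} (h : IndepFun W V μ) (s t : ℝ) :
    (μ ({ω | s < W ω} ∩ {ω | t < V ω})).toReal = tailP μ W s * tailP μ V t := by
  have := h.measure_inter_preimage_eq_mul (Ioi s) (Ioi t) measurableSet_Ioi measurableSet_Ioi
  have heq : W ⁻¹' Ioi s = {ω | s < W ω} := rfl
  have heq2 : V ⁻¹' Ioi t = {ω | t < V ω} := rfl
  rw [heq, heq2] at this
  rw [tailP, tailP, this, ENNReal.toReal_mul]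

lemma tailP_tendsto_zero' (W : Ω → ℝ) (hW : Measurable W) :
    Tendsto (fun v => tailP μ W v) atTop (nhds 0) := by
  have h0 : Tendsto (fun v => μ {ω | v < W ω}) atTop (nhds (μ (⋂ v : ℝ, {ω | v < W ω}))) :=
    tendsto_measure_iInter_atTop
      (fun v => (measurableSet_lt measurable_const hW).nullMeasurableSet)
      (fun a b hab ω h => lt_of_le_of_lt hab h) ⟨0, measure_ne_top μ _⟩
  have hempty : (⋂ v : ℝ, {ω | v < W ω}) = ∅ := by
    ext ω; simp only [mem_iInter, mem_setOf_eq, mem_empty_iff_false, iff_false, not_forall, not_lt]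
    exact ⟨W ω, le_refl _⟩
  rw [hempty, measure_empty] at h0
  have := (ENNReal.tendsto_toReal ENNReal.zero_ne_top).comp h0
  simpa [tailP, Function.comp_def] using this

lemma lower_trunc_tendsto_one (ε : Ω → ℝ) (hε : Measurable ε) (η : ℝ) (hη : 0 < η) :
    Tendsto (fun v => (μ {ω | -(η*v) < ε ω}).toReal) atTop (nhds 1) := by
  have hq : Tendsto (fun v => (μ {ω | ε ω ≤ -(η*v)}).toReal) atTop (nhds 0) := by
    apply squeeze_zero (fun v => ENNReal.toReal_nonneg)
      (g := fun v => tailP μ (fun ω => -ε ω) (η*v - 1))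
    · intro v
      apply ENNReal.toReal_mono (measure_ne_top μ _)
      apply measure_mono
      intro ω h
      simp only [mem_setOf_eq] at h ⊢
      linarith
    · have hcomp : Tendsto (fun v : ℝ => η*v - 1) atTop atTop :=
        tendsto_atTop_add_const_right _ _ (tendsto_id.const_mul_atTop hη)
      exact (tailP_tendsto_zero' μ (fun ω => -ε ω) hε.neg).comp hcomp
  have heq : ∀ v : ℝ, (μ {ω | -(η*v) < ε ω}).toReal = 1 - (μ {ω | ε ω ≤ -(η*v)}).toReal := by
    intro v
    have hms : MeasurableSet {ω | ε ω ≤ -(η*v)} := measurableSet_le hε measurable_const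
    have hcompl : {ω | -(η*v) < ε ω} = {ω | ε ω ≤ -(η*v)}ᶜ := by
      ext ω; simp [not_le]
    rw [hcompl, measure_compl hms (measure_ne_top μ _), measure_univ,
      ENNReal.toReal_sub_of_le (prob_le_one) ENNReal.one_ne_top, ENNReal.toReal_one]
  simp only [heq]
  have := hq.const_sub (1:ℝ)
  simpa using this

lemma gf_ratio {Ω : Type*} [MeasurableSpace Ω] (μ : Measure Ω) [IsProbabilityMeasure μ]
    (ε Z : Ω → ℝ) (θ : ℝ) (hrv : RegVarying μ ε θ) (c : ℝ)
    (hc : Tendsto (fun v => tailP μ Z v / tailP μ ε v) atTop (nhds c))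
    (α : ℝ) (hα : 0 < α) :
    Tendsto (fun v => tailP μ Z (α*v) / tailP μ ε v) atTop (nhds (c * α ^ (-θ))) := by
  have hmulatTop : Tendsto (fun v : ℝ => α * v) atTop atTop := tendsto_id.const_mul_atTop hα
  have h1 : Tendsto (fun v => tailP μ Z (α*v) / tailP μ ε (α*v)) atTop (nhds c) :=
    hc.comp hmulatTop
  have h2 := h1.mul (rv_ratio μ ε θ hrv α hα)
  apply h2.congr'
  have hev : ∀ᶠ v in atTop, 0 < tailP μ ε (α*v) := hmulatTop.eventually (rv_event_pos μ ε θ hrv)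
  filter_upwards [hev] with v hv
  field_simp

lemma rpow_trick (θ : ℝ) (hθ : 0 < θ) (s : ℝ) (hs : 0 < s+1) :
    ((s+1) ^ (-(1/θ))) ^ (-θ) = s+1 := by
  rw [← Real.rpow_mul hs.le]
  have : (-(1/θ)) * (-θ) = 1 := by field_simp
  rw [this, Real.rpow_one]

lemma hmain {Ω : Type*} [MeasurableSpace Ω] (μ : Measure Ω) [IsProbabilityMeasure μ]
    (ε Z : Ω → ℝ) (hε : Measurable ε) (hZ : Measurable Z)
    (hεZ : IndepFun ε Z μ) (hZnonneg : ∀ᵐ ω ∂μ, 0 ≤ Z ω)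
    (θ : ℝ) (hθ : 0 < θ) (hrv : RegVarying μ ε θ)
    (c : ℝ) (hc0 : 0 ≤ c)
    (hc : Tendsto (fun v => tailP μ Z v / tailP μ ε v) atTop (nhds c)) :
    Tendsto (fun v => (μ {ω | v < ε ω + Z ω}).toReal / tailP μ ε v) atTop (nhds (1+c)) := by
  have hZ0 : μ {ω | ¬ (0 ≤ Z ω)} = 0 := by
    exact hZnonneg
  rw [Metric.tendsto_nhds]
  intro ρ hρ
  have hupper : ∀ᶠ v in atTop, (μ {ω | v < ε ω + Z ω}).toReal / tailP μ ε v < 1 + c + ρ := by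
    set s : ℝ := ρ / (2*(1+c)) with hs_def
    have hs : 0 < s := by positivity
    set β : ℝ := (s+1) ^ (-(1/θ)) with hβ_def
    have hβ0 : 0 < β := Real.rpow_pos_of_pos (by linarith) _
    have hβ1 : β < 1 := Real.rpow_lt_one_of_one_lt_of_neg (by linarith) (neg_neg_iff_pos.mpr (by positivity))
    have hβθ : β ^ (-θ) = s + 1 := rpow_trick θ hθ s (by linarith)
    set η : ℝ := 1 - β with hη_def
    have hη0 : 0 < η := by simp only [hη_def]; linarith
    -- pointwise bound
    have hpt : ∀ᶠ v in atTop,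
        (μ {ω | v < ε ω + Z ω}).toReal / tailP μ ε v ≤
          tailP μ ε (β*v) / tailP μ ε v + tailP μ Z (β*v) / tailP μ ε v
            + (tailP μ ε (η*v) / tailP μ ε v) * tailP μ Z (η*v) := by
      filter_upwards [rv_event_pos μ ε θ hrv] with v hfv
      have hincl : {ω | v < ε ω + Z ω} ⊆
          ({ω | β*v < ε ω} ∪ {ω | β*v < Z ω}) ∪ ({ω | η*v < ε ω} ∩ {ω | η*v < Z ω}) := by
        intro ω hω
        simp only [mem_setOf_eq, mem_union, mem_inter_iff] at hω ⊢
        by_cases h1 : β*v < ε ω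
        · exact Or.inl (Or.inl h1)
        by_cases h2 : β*v < Z ω
        · exact Or.inl (Or.inr h2)
        push_neg at h1 h2
        right
        have hbv : η * v = v - β*v := by rw [hη_def]; ring
        constructor <;> linarith
      have hmeas : (μ {ω | v < ε ω + Z ω}).toReal ≤
          tailP μ ε (β*v) + tailP μ Z (β*v) + tailP μ ε (η*v) * tailP μ Z (η*v) := by
        have h1 : μ {ω | v < ε ω + Z ω} ≤
            μ ({ω | β*v < ε ω} ∪ {ω | β*v < Z ω}) + μ ({ω | η*v < ε ω} ∩ {ω | η*v < Z ω}) :=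
          (measure_mono hincl).trans (measure_union_le _ _)
        have h2 : μ ({ω | β*v < ε ω} ∪ {ω | β*v < Z ω}) ≤ μ {ω | β*v < ε ω} + μ {ω | β*v < Z ω} :=
          measure_union_le _ _
        calc (μ {ω | v < ε ω + Z ω}).toReal
            ≤ ((μ {ω | β*v < ε ω} + μ {ω | β*v < Z ω})
                + μ ({ω | η*v < ε ω} ∩ {ω | η*v < Z ω})).toReal := by
                apply ENNReal.toReal_mono _ (h1.trans (by gcongr))
                simp [measure_ne_top, ENNReal.add_ne_top]
          _ = tailP μ ε (β*v) + tailP μ Z (β*v) + (μ ({ω | η*v < ε ω} ∩ {ω | η*v < Z ω})).toReal := by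
                rw [ENNReal.toReal_add, ENNReal.toReal_add] <;>
                  simp [measure_ne_top, ENNReal.add_ne_top, tailP]
          _ = tailP μ ε (β*v) + tailP μ Z (β*v) + tailP μ ε (η*v) * tailP μ Z (η*v) := by
                rw [indep_tail_mul μ hεZ]
      calc (μ {ω | v < ε ω + Z ω}).toReal / tailP μ ε v
          ≤ (tailP μ ε (β*v) + tailP μ Z (β*v) + tailP μ ε (η*v) * tailP μ Z (η*v)) / tailP μ ε v := by
            exact div_le_div_of_nonneg_right hmeas hfv.le
        _ = tailP μ ε (β*v) / tailP μ ε v + tailP μ Z (β*v) / tailP μ ε v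
            + (tailP μ ε (η*v) / tailP μ ε v) * tailP μ Z (η*v) := by
            field_simp
    -- limit of the bound
    have hlim : Tendsto (fun v => tailP μ ε (β*v) / tailP μ ε v + tailP μ Z (β*v) / tailP μ ε v
        + (tailP μ ε (η*v) / tailP μ ε v) * tailP μ Z (η*v)) atTop
        (nhds ((s+1) + c*(s+1) + (η ^ (-θ)) * 0)) := by
      have h1 : Tendsto (fun v => tailP μ ε (β*v) / tailP μ ε v) atTop (nhds (s+1)) := by
        have := rv_ratio μ ε θ hrv β hβ0
        rwa [hβθ] at this
      have h2 : Tendsto (fun v => tailP μ Z (β*v) / tailP μ ε v) atTop (nhds (c*(s+1))) := by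
        have := gf_ratio μ ε Z θ hrv c hc β hβ0
        rwa [hβθ] at this
      have h3 : Tendsto (fun v => (tailP μ ε (η*v) / tailP μ ε v) * tailP μ Z (η*v)) atTop
          (nhds ((η ^ (-θ)) * 0)) := by
        exact (rv_ratio μ ε θ hrv η hη0).mul
          ((tailP_tendsto_zero' μ Z hZ).comp (tendsto_id.const_mul_atTop hη0))
      exact (h1.add h2).add h3
    have hval : (s+1) + c*(s+1) + (η ^ (-θ)) * 0 < 1 + c + ρ := by
      have : (1+c) * s = ρ/2 := by
        rw [hs_def]; field_simp
      nlinarith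
    filter_upwards [hpt, hlim.eventually_lt_const hval] with v h1 h2
    exact lt_of_le_of_lt h1 h2
  have hlower : ∀ᶠ v in atTop, 1 + c - ρ < (μ {ω | v < ε ω + Z ω}).toReal / tailP μ ε v := by
    set t : ℝ := min (ρ / (2*(c+1))) (1/2) with ht_def
    have ht0 : 0 < t := lt_min (by positivity) (by norm_num)
    have ht2 : t ≤ 1/2 := min_le_right _ _
    have h1t : 0 < 1 - t := by linarith
    set γ : ℝ := (1-t) ^ (-(1/θ)) with hγ_def
    have hγ0 : 0 < γ := Real.rpow_pos_of_pos h1t _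
    have hγ1 : 1 < γ := by
      rw [hγ_def]
      rw [Real.one_lt_rpow_iff_of_pos h1t]
      exact Or.inr ⟨by linarith, neg_neg_iff_pos.mpr (by positivity)⟩
    have hγθ : γ ^ (-θ) = 1 - t := by
      have := rpow_trick θ hθ (-t) (by linarith)
      rw [hγ_def]
      rw [show (1:ℝ) - t = -t + 1 by ring]
      exact this
    set η : ℝ := γ - 1 with hη_def
    have hη0 : 0 < η := by simp only [hη_def]; linarith
    have he : Tendsto (fun v => (μ {ω | -(η*v) < ε ω}).toReal) atTop (nhds 1) :=
      lower_trunc_tendsto_one μ ε hε η hη0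
    have hpt : ∀ᶠ v in atTop,
        1 + (μ {ω | -(η*v) < ε ω}).toReal * (tailP μ Z (γ*v) / tailP μ ε v) - tailP μ Z (γ*v)
          ≤ (μ {ω | v < ε ω + Z ω}).toReal / tailP μ ε v := by
      filter_upwards [rv_event_pos μ ε θ hrv] with v hfv
      set A := {ω | v < ε ω} with hA_def
      set B := {ω | -(η*v) < ε ω} ∩ {ω | γ*v < Z ω} with hB_def
      have hBm : MeasurableSet B :=
        (measurableSet_lt measurable_const hε).inter (measurableSet_lt measurable_const hZ)
      have step1 : μ (A ∪ B) ≤ μ {ω | v < ε ω + Z ω} := by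
        have hincl : A ∪ B ⊆ {ω | v < ε ω + Z ω} ∪ {ω | ¬ 0 ≤ Z ω} := by
          intro ω hω
          simp only [hA_def, hB_def, mem_union, mem_inter_iff, mem_setOf_eq] at hω ⊢
          have hbv : γ * v - η * v = v := by rw [hη_def]; ring
          rcases hω with hω | ⟨h1, h2⟩
          · by_cases h0 : 0 ≤ Z ω
            · exact Or.inl (by linarith)
            · exact Or.inr h0
          · exact Or.inl (by linarith)
        calc μ (A ∪ B) ≤ μ ({ω | v < ε ω + Z ω} ∪ {ω | ¬ 0 ≤ Z ω}) := measure_mono hincl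
          _ ≤ μ {ω | v < ε ω + Z ω} + μ {ω | ¬ 0 ≤ Z ω} := measure_union_le _ _
          _ = μ {ω | v < ε ω + Z ω} := by rw [hZ0, add_zero]
      have hsum : (μ (A ∪ B)).toReal + (μ (A ∩ B)).toReal = (μ A).toReal + (μ B).toReal := by
        have h := measure_union_add_inter (μ := μ) A hBm
        have h2 := congrArg ENNReal.toReal h
        rwa [ENNReal.toReal_add (measure_ne_top μ _) (measure_ne_top μ _),
          ENNReal.toReal_add (measure_ne_top μ _) (measure_ne_top μ _)] at h2
      have hB_eq : (μ B).toReal = (μ {ω | -(η*v) < ε ω}).toReal * tailP μ Z (γ*v) := by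
        rw [hB_def, indep_tail_mul μ hεZ]
        rfl
      have hAB : (μ (A ∩ B)).toReal ≤ tailP μ ε v * tailP μ Z (γ*v) := by
        rw [← indep_tail_mul μ hεZ v (γ*v)]
        apply ENNReal.toReal_mono (measure_ne_top μ _)
        apply measure_mono
        rintro ω ⟨h1, _, h3⟩
        exact ⟨h1, h3⟩
      have h1 : (μ (A ∪ B)).toReal ≤ (μ {ω | v < ε ω + Z ω}).toReal :=
        ENNReal.toReal_mono (measure_ne_top μ _) step1
      have hmeasineq : tailP μ ε v
            + (μ {ω | -(η*v) < ε ω}).toReal * tailP μ Z (γ*v) - tailP μ ε v * tailP μ Z (γ*v)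
          ≤ (μ {ω | v < ε ω + Z ω}).toReal := by
        have hfA : (μ A).toReal = tailP μ ε v := rfl
        linarith [hsum, hB_eq, hAB, h1]
      have key : (tailP μ ε v + (μ {ω | -(η*v) < ε ω}).toReal * tailP μ Z (γ*v)
            - tailP μ ε v * tailP μ Z (γ*v)) / tailP μ ε v
          = 1 + (μ {ω | -(η*v) < ε ω}).toReal * (tailP μ Z (γ*v) / tailP μ ε v)
            - tailP μ Z (γ*v) := by
        field_simp
      rw [← key]
      exact div_le_div_of_nonneg_right hmeasineq hfv.le
    have hlim : Tendsto (fun v =>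
        1 + (μ {ω | -(η*v) < ε ω}).toReal * (tailP μ Z (γ*v) / tailP μ ε v) - tailP μ Z (γ*v))
        atTop (nhds (1 + 1 * (c * (1 - t)) - 0)) := by
      have h2 : Tendsto (fun v => tailP μ Z (γ*v) / tailP μ ε v) atTop (nhds (c * (1-t))) := by
        have := gf_ratio μ ε Z θ hrv c hc γ hγ0
        rwa [hγθ] at this
      have h3 : Tendsto (fun v => tailP μ Z (γ*v)) atTop (nhds 0) :=
        (tailP_tendsto_zero' μ Z hZ).comp (tendsto_id.const_mul_atTop hγ0)
      exact (tendsto_const_nhds.add (he.mul h2)).sub h3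
    have hval : 1 + c - ρ < 1 + 1 * (c * (1 - t)) - 0 := by
      have h2 : t ≤ ρ/(2*(c+1)) := min_le_left _ _
      have h3 : c * t ≤ c * (ρ/(2*(c+1))) := mul_le_mul_of_nonneg_left h2 hc0
      have h4 : c * (ρ/(2*(c+1))) ≤ ρ/2 := by
        rw [mul_div_assoc']
        rw [div_le_div_iff₀ (by positivity) (by norm_num)]
        nlinarith
      nlinarith
    filter_upwards [hpt, hlim.eventually_const_lt hval] with v h1 h2
    exact lt_of_lt_of_le h2 h1
  filter_upwards [hupper, hlower] with v h1 h2
  rw [Real.dist_eq, abs_sub_lt_iff]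
  constructor <;> linarith

end Aux

/-- if ε ⟂ Z, Z ≥ 0 a.s., ε regularly varying with index θ,
P(Z > v)/P(ε > v) → c ∈ [0,∞), X ⟂ ε and p = P(X > λ) < 1, then
limsup_v P(X > λ | ε + Z > v) ≤ (p + c)/(1 + c) < 1. -/
theorem stmt_13 {Ω : Type*} [MeasurableSpace Ω] (μ : Measure Ω) [IsProbabilityMeasure μ]
    (ε Z X : Ω → ℝ) (hε : Measurable ε) (hZ : Measurable Z) (hXm : Measurable X)
    (hεZ : IndepFun ε Z μ) (hXε : IndepFun X ε μ)
    (hZnonneg : ∀ᵐ ω ∂μ, 0 ≤ Z ω)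
    (θ : ℝ) (hθ : 0 < θ) (hrv : RegVarying μ ε θ)
    (c : ℝ) (hc0 : 0 ≤ c)
    (hc : Tendsto (fun v => tailP μ Z v / tailP μ ε v) atTop (nhds c))
    (l : ℝ) (hp : tailP μ X l < 1) :
    (tailP μ X l + c) / (1 + c) < 1 ∧
    ∀ δ > 0, ∀ᶠ v in atTop,
      condP μ {ω | l < X ω} {ω | v < ε ω + Z ω} ≤ (tailP μ X l + c) / (1 + c) + δ := by
  have hc1 : (0:ℝ) < 1 + c := by linarith
  have hp0 : (0:ℝ) ≤ tailP μ X l := ENNReal.toReal_nonneg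
  set p : ℝ := tailP μ X l with hp_def
  have hZ0 : μ {ω | ¬ (0 ≤ Z ω)} = 0 := hZnonneg
  constructor
  · rw [div_lt_one hc1]; linarith
  intro δ hδ
  -- choose η through s₂
  set s₂ : ℝ := δ*(1+c)/(2*(p+1)) with hs2_def
  have hs2 : 0 < s₂ := by positivity
  set β : ℝ := (s₂+1) ^ (-(1/θ)) with hβ_def
  have hβ0 : 0 < β := Real.rpow_pos_of_pos (by linarith) _
  have hβ1 : β < 1 := Real.rpow_lt_one_of_one_lt_of_neg (by linarith)
    (neg_neg_iff_pos.mpr (by positivity))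
  have hβθ : β ^ (-θ) = s₂ + 1 := rpow_trick θ hθ s₂ (by linarith)
  -- the main ratio limit
  have hr : Tendsto (fun v => (μ {ω | v < ε ω + Z ω}).toReal / tailP μ ε v) atTop
      (nhds (1+c)) := hmain μ ε Z hε hZ hεZ hZnonneg θ hθ hrv c hc0 hc
  have hrinv : Tendsto (fun v => ((μ {ω | v < ε ω + Z ω}).toReal / tailP μ ε v)⁻¹) atTop
      (nhds (1+c)⁻¹) := hr.inv₀ (ne_of_gt hc1)
  have hfβ : Tendsto (fun v => tailP μ ε (β*v) / tailP μ ε v) atTop (nhds (s₂+1)) := by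
    have := rv_ratio μ ε θ hrv β hβ0
    rwa [hβθ] at this
  have hF : Tendsto (fun v =>
      p * ((tailP μ ε (β*v) / tailP μ ε v)
          * ((μ {ω | v < ε ω + Z ω}).toReal / tailP μ ε v)⁻¹)
        + (1 - ((μ {ω | v < ε ω + Z ω}).toReal / tailP μ ε v)⁻¹)) atTop
      (nhds (p * ((s₂+1) * (1+c)⁻¹) + (1 - (1+c)⁻¹))) :=
    ((hfβ.mul hrinv).const_mul p).add (tendsto_const_nhds.sub hrinv)
  have hval : p * ((s₂+1) * (1+c)⁻¹) + (1 - (1+c)⁻¹) < (p + c)/(1+c) + δ := by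
    have h1 : p * s₂ ≤ δ*(1+c)/2 := by
      rw [hs2_def, mul_div_assoc']
      rw [div_le_div_iff₀ (by positivity) (by norm_num)]
      nlinarith
    have hL : p * ((s₂+1) * (1+c)⁻¹) + (1 - (1+c)⁻¹) = (p*(s₂+1) + c)/(1+c) := by
      field_simp
      ring
    have hR : (p + c)/(1+c) + δ = (p + c + δ*(1+c))/(1+c) := by
      field_simp
    rw [hL, hR, div_lt_div_iff₀ hc1 hc1]
    have h2 : p*(s₂+1) + c < p + c + δ*(1+c) := by nlinarith [mul_pos hδ hc1]
    exact mul_lt_mul_of_pos_right h2 hc1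
  have hpt : ∀ᶠ v in atTop, condP μ {ω | l < X ω} {ω | v < ε ω + Z ω} ≤
      p * ((tailP μ ε (β*v) / tailP μ ε v)
          * ((μ {ω | v < ε ω + Z ω}).toReal / tailP μ ε v)⁻¹)
        + (1 - ((μ {ω | v < ε ω + Z ω}).toReal / tailP μ ε v)⁻¹) := by
    filter_upwards [rv_event_pos μ ε θ hrv, eventually_ge_atTop (0:ℝ)] with v hfv hv0
    have hfhE : μ {ω | v < ε ω} ≤ μ {ω | v < ε ω + Z ω} := by
      calc μ {ω | v < ε ω} ≤ μ ({ω | v < ε ω + Z ω} ∪ {ω | ¬ 0 ≤ Z ω}) := by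
            apply measure_mono
            intro ω hω
            simp only [mem_setOf_eq, mem_union] at hω ⊢
            by_cases h0 : 0 ≤ Z ω
            · exact Or.inl (by linarith)
            · exact Or.inr h0
        _ ≤ μ {ω | v < ε ω + Z ω} + μ {ω | ¬ 0 ≤ Z ω} := measure_union_le _ _
        _ = μ {ω | v < ε ω + Z ω} := by rw [hZ0, add_zero]
    have hfh : tailP μ ε v ≤ (μ {ω | v < ε ω + Z ω}).toReal :=
      ENNReal.toReal_mono (measure_ne_top μ _) hfhE
    have hh0 : 0 < (μ {ω | v < ε ω + Z ω}).toReal := lt_of_lt_of_le hfv hfh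
    -- numerator inequality
    have hEA : μ ({ω | v < ε ω + Z ω} ∩ {ω | v < ε ω}) = μ {ω | v < ε ω} := by
      apply le_antisymm (measure_mono inter_subset_right)
      calc μ {ω | v < ε ω}
          ≤ μ ({ω | v < ε ω} ∩ {ω | v < ε ω + Z ω}) + μ ({ω | v < ε ω} \ {ω | v < ε ω + Z ω}) :=
            measure_le_inter_add_diff μ _ _
        _ = μ ({ω | v < ε ω + Z ω} ∩ {ω | v < ε ω}) := by
            rw [inter_comm]
            have : μ ({ω | v < ε ω} \ {ω | v < ε ω + Z ω}) = 0 := by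
              apply measure_mono_null _ hZ0
              rintro ω ⟨h1, h2⟩
              simp only [mem_setOf_eq] at h1 h2 ⊢
              intro h0
              exact h2 (by linarith)
            rw [this, add_zero]
    have hnum : (μ ({ω | l < X ω} ∩ {ω | v < ε ω + Z ω})).toReal ≤
        p * tailP μ ε (β*v) + ((μ {ω | v < ε ω + Z ω}).toReal - tailP μ ε v) := by
      have hincl : {ω | l < X ω} ∩ {ω | v < ε ω + Z ω} ⊆
          ({ω | l < X ω} ∩ {ω | β*v < ε ω}) ∪ ({ω | v < ε ω + Z ω} \ {ω | v < ε ω}) := by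
        rintro ω ⟨h1, h2⟩
        simp only [mem_setOf_eq] at h1 h2
        by_cases h3 : β*v < ε ω
        · exact Or.inl ⟨h1, h3⟩
        · push_neg at h3
          have hβv : β*v ≤ v := by nlinarith
          exact Or.inr ⟨h2, by simp only [mem_setOf_eq]; linarith⟩
      have hS2 : (μ ({ω | v < ε ω + Z ω} \ {ω | v < ε ω})).toReal =
          (μ {ω | v < ε ω + Z ω}).toReal - tailP μ ε v := by
        have hmA : MeasurableSet ({ω | v < ε ω + Z ω} ∩ {ω | v < ε ω}) :=
          (measurableSet_lt measurable_const (hε.add hZ)).inter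
            (measurableSet_lt measurable_const hε)
        have hd : {ω | v < ε ω + Z ω} \ {ω | v < ε ω} =
            {ω | v < ε ω + Z ω} \ ({ω | v < ε ω + Z ω} ∩ {ω | v < ε ω}) := by
          rw [diff_self_inter]
        rw [hd, measure_diff inter_subset_left hmA.nullMeasurableSet (measure_ne_top μ _), hEA,
          ENNReal.toReal_sub_of_le hfhE (measure_ne_top μ _)]
        rfl
      calc (μ ({ω | l < X ω} ∩ {ω | v < ε ω + Z ω})).toReal
          ≤ ((μ ({ω | l < X ω} ∩ {ω | β*v < ε ω}))
              + μ ({ω | v < ε ω + Z ω} \ {ω | v < ε ω})).toReal := by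
            apply ENNReal.toReal_mono (ENNReal.add_ne_top.mpr ⟨measure_ne_top μ _, measure_ne_top μ _⟩)
            exact (measure_mono hincl).trans (measure_union_le _ _)
        _ = (μ ({ω | l < X ω} ∩ {ω | β*v < ε ω})).toReal
              + (μ ({ω | v < ε ω + Z ω} \ {ω | v < ε ω})).toReal := by
            rw [ENNReal.toReal_add (measure_ne_top μ _) (measure_ne_top μ _)]
        _ = p * tailP μ ε (β*v) + ((μ {ω | v < ε ω + Z ω}).toReal - tailP μ ε v) := by
            rw [indep_tail_mul μ hXε l (β*v), hS2, hp_def]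
    rw [condP]
    have key : (p * tailP μ ε (β*v) + ((μ {ω | v < ε ω + Z ω}).toReal - tailP μ ε v))
          / (μ {ω | v < ε ω + Z ω}).toReal =
        p * ((tailP μ ε (β*v) / tailP μ ε v)
            * ((μ {ω | v < ε ω + Z ω}).toReal / tailP μ ε v)⁻¹)
          + (1 - ((μ {ω | v < ε ω + Z ω}).toReal / tailP μ ε v)⁻¹) := by
      simp only [inv_div]
      field_simp [hfv.ne', hh0.ne']
    rw [← key]
    exact div_le_div_of_nonneg_right hnum hh0.le
  filter_upwards [hpt, hF.eventually_lt_const hval] with v h1 h2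
  exact h1.trans h2.le
end

section
/- Let (X_t, Y_t) follow a stable VAR(q) model with non-negative coefficients and causal representation X_t = ∑ aᵢε^X_{t−i} + ∑ cᵢε^Y_{t−i}, Y_t = ∑ bᵢε^Y_{t−i} + ∑ dᵢε^X_{t−i}. If X causes Y in the sense that the structural coefficient δ_r > 0 for some r ≤ q (so that Y_r = δ_r X_0 + (other non-negative terms)), then the extremal causal condition holds: there exists r ≤ q such that for every i ≥ 0, aᵢ > 0 implies d_{i+r} > 0. -/
open MeasureTheory ProbabilityTheory Filter Set

lemma meas_tsum_aux {Ω : Type*} {M : MeasurableSpace Ω} (f : ℕ → Ω → ℝ)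
    (hf : ∀ j, Measurable[M] (f j)) (hsum : ∀ ω, Summable fun j => f j ω) :
    Measurable[M] fun ω => ∑' j, f j ω := by
  have h : ∀ ω, Tendsto (fun n => ∑ j ∈ Finset.range n, f j ω) atTop
      (nhds (∑' j, f j ω)) := fun ω => (hsum ω).hasSum.tendsto_sum_nat
  exact measurable_of_tendsto_metrizable
    (fun n => Finset.measurable_sum _ fun j _ => hf j)
    (tendsto_pi_nhds.2 h)

lemma summable_mask {f : ℕ → ℝ} (hf : Summable f) (b : ℕ) :
    Summable fun j => if j = b then 0 else f j := by
  have h1 : Summable fun j : ℕ => if j = b then f b else 0 :=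
    (hasSum_ite_eq b (f b)).summable
  have h2 : Summable fun j : ℕ => if j = b then f j else 0 :=
    h1.congr fun j => by by_cases h : j = b <;> simp [h]
  exact (hf.sub h2).congr fun j => by by_cases h : j = b <;> simp [h]

lemma atom_of_zero_one {Ω : Type*} [MeasurableSpace Ω] (μ : Measure Ω) [IsProbabilityMeasure μ]
    (Z : Ω → ℝ) (hZ : Measurable Z)
    (h01 : ∀ t : ℝ, μ {ω | Z ω ≤ t} = 0 ∨ μ {ω | Z ω ≤ t} = 1) :
    ∃ v : ℝ, μ {ω | Z ω = v} ≠ 0 := by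
  set S : Set ℝ := {t | μ {ω | Z ω ≤ t} = 1} with hS
  have hne : S.Nonempty := by
    by_contra h
    have hz : ∀ t : ℝ, μ {ω | Z ω ≤ t} = 0 := by
      intro t
      rcases h01 t with h0 | h1
      · exact h0
      · exact absurd (⟨t, h1⟩ : S.Nonempty) h
    have hcov : (Set.univ : Set Ω) ⊆ ⋃ n : ℕ, {ω | Z ω ≤ (n : ℝ)} := by
      intro ω _
      obtain ⟨n, hn⟩ := exists_nat_ge (Z ω)
      exact Set.mem_iUnion.2 ⟨n, hn⟩
    have : μ (Set.univ : Set Ω) = 0 :=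
      measure_mono_null hcov (measure_iUnion_null fun n => hz n)
    simp [measure_univ] at this
  obtain ⟨t0, ht0⟩ : ∃ t0 : ℝ, μ {ω | Z ω ≤ t0} = 0 := by
    by_contra h
    push_neg at h
    have hall : ∀ t : ℝ, μ {ω | Z ω ≤ t} = 1 := fun t => (h01 t).resolve_left (h t)
    have hcov : (Set.univ : Set Ω) ⊆ ⋃ n : ℕ, {ω | Z ω ≤ (-(n : ℝ))}ᶜ := by
      intro ω _
      obtain ⟨n, hn⟩ := exists_nat_gt (-(Z ω))
      exact Set.mem_iUnion.2 ⟨n, by simp only [Set.mem_compl_iff, Set.mem_setOf_eq]; push_neg; linarith⟩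
    have hnull : ∀ n : ℕ, μ ({ω | Z ω ≤ (-(n : ℝ))}ᶜ) = 0 := by
      intro n
      have hm : MeasurableSet {ω | Z ω ≤ (-(n : ℝ))} := hZ measurableSet_Iic
      rw [measure_compl hm (measure_ne_top μ _), hall, measure_univ, tsub_self]
    have : μ (Set.univ : Set Ω) = 0 :=
      measure_mono_null hcov (measure_iUnion_null hnull)
    simp [measure_univ] at this
  have hbdd : BddBelow S := by
    refine ⟨t0, fun t ht => ?_⟩
    by_contra hlt
    push_neg at hlt
    have : μ {ω | Z ω ≤ t} ≤ μ {ω | Z ω ≤ t0} :=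
      measure_mono fun ω hω => le_trans hω hlt.le
    rw [ht0, ht] at this
    simp at this
  set t1 := sInf S with ht1
  have h_hi : ∀ u : ℝ, t1 < u → μ {ω | Z ω ≤ u} = 1 := by
    intro u hu
    obtain ⟨t, htS, htu⟩ := exists_lt_of_csInf_lt hne hu
    have hle : μ {ω | Z ω ≤ t} ≤ μ {ω | Z ω ≤ u} :=
      measure_mono fun ω hω => le_trans hω htu.le
    rw [htS] at hle
    exact le_antisymm prob_le_one hle
  have h_lo : ∀ u : ℝ, u < t1 → μ {ω | Z ω ≤ u} = 0 := by
    intro u hu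
    rcases h01 u with h0 | h1
    · exact h0
    · exact absurd (csInf_le hbdd h1) (not_le.2 hu)
  refine ⟨t1, ?_⟩
  have hcov : {ω | Z ω ≠ t1} ⊆
      ⋃ n : ℕ, ({ω | Z ω ≤ t1 - ((n : ℝ) + 1)⁻¹} ∪ ({ω | Z ω ≤ t1 + ((n : ℝ) + 1)⁻¹})ᶜ) := by
    intro ω hω
    rcases lt_or_gt_of_ne (hω : Z ω ≠ t1) with h | h
    · obtain ⟨n, hn⟩ := exists_nat_one_div_lt (sub_pos.2 h)
      refine Set.mem_iUnion.2 ⟨n, Or.inl ?_⟩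
      simp only [Set.mem_setOf_eq]
      rw [one_div] at hn
      linarith
    · obtain ⟨n, hn⟩ := exists_nat_one_div_lt (sub_pos.2 h)
      refine Set.mem_iUnion.2 ⟨n, Or.inr ?_⟩
      simp only [Set.mem_compl_iff, Set.mem_setOf_eq]
      push_neg
      rw [one_div] at hn
      linarith
  have hnull : μ {ω | Z ω ≠ t1} = 0 := by
    refine measure_mono_null hcov (measure_iUnion_null fun n => ?_)
    have hpos : (0 : ℝ) < ((n : ℝ) + 1)⁻¹ := by positivity
    refine measure_union_null (h_lo _ (by linarith)) ?_
    have hm : MeasurableSet {ω | Z ω ≤ t1 + ((n : ℝ) + 1)⁻¹} := hZ measurableSet_Iic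
    rw [measure_compl hm (measure_ne_top μ _), h_hi _ (by linarith), measure_univ, tsub_self]
  intro hcontra
  have : μ (Set.univ : Set Ω) = 0 := by
    have : (Set.univ : Set Ω) ⊆ {ω | Z ω = t1} ∪ {ω | Z ω ≠ t1} := by
      intro ω _; by_cases h : Z ω = t1
      · exact Or.inl h
      · exact Or.inr h
    exact measure_mono_null this (measure_union_null hcontra hnull)
  simp [measure_univ] at this

/-- extremal causal condition in the hVAR model: if the causal (MA)
representation of (X, Y) has non-negative coefficients and Y_r = δ_r X_0 + (other
non-negative MA terms) with δ_r > 0 for some r ≤ q, then there is r' ≤ q such that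
aᵢ > 0 implies d_{i+r'} > 0 for every i. -/
theorem stmt_16 {Ω : Type*} [MeasurableSpace Ω] (μ : Measure Ω) [IsProbabilityMeasure μ]
    (εX εY : ℤ → Ω → ℝ)
    (hmeasX : ∀ t, Measurable (εX t)) (hmeasY : ∀ t, Measurable (εY t))
    (hindep : iIndepFun (Sum.elim εX εY) μ)
    (hcontX : ∀ t, ∀ v : ℝ, μ {ω | εX t ω = v} = 0)
    (hcontY : ∀ t, ∀ v : ℝ, μ {ω | εY t ω = v} = 0)
    (X Y : ℤ → Ω → ℝ)
    (a b c d p s : ℕ → ℝ)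
    (ha : ∀ i, 0 ≤ a i) (hb : ∀ i, 0 ≤ b i) (hc : ∀ i, 0 ≤ c i) (hd : ∀ i, 0 ≤ d i)
    (hp : ∀ i, 0 ≤ p i) (hs : ∀ i, 0 ≤ s i)
    (q r : ℕ) (hrq : r ≤ q) (δr : ℝ) (hδr : 0 < δr)
    (hsummable : ∀ ω, ∀ t : ℤ,
      Summable (fun i : ℕ => a i * εX (t - (i : ℤ)) ω) ∧
      Summable (fun i : ℕ => c i * εY (t - (i : ℤ)) ω) ∧
      Summable (fun i : ℕ => b i * εY (t - (i : ℤ)) ω) ∧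
      Summable (fun i : ℕ => d i * εX (t - (i : ℤ)) ω) ∧
      Summable (fun i : ℕ => p i * εX (t - (i : ℤ)) ω) ∧
      Summable (fun i : ℕ => s i * εY (t - (i : ℤ)) ω))
    (hXrep : ∀ t ω, X t ω =
      (∑' i : ℕ, a i * εX (t - (i : ℤ)) ω) + ∑' i : ℕ, c i * εY (t - (i : ℤ)) ω)
    (hYrep : ∀ t ω, Y t ω =
      (∑' i : ℕ, b i * εY (t - (i : ℤ)) ω) + ∑' i : ℕ, d i * εX (t - (i : ℤ)) ω)
    (hstruct : ∀ ω, Y (r : ℤ) ω = δr * X 0 ω +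
      ((∑' i : ℕ, p i * εX ((r : ℤ) - (i : ℤ)) ω) +
        ∑' i : ℕ, s i * εY ((r : ℤ) - (i : ℤ)) ω)) :
    ∃ r' : ℕ, r' ≤ q ∧ ∀ i : ℕ, 0 < a i → 0 < d (i + r') := by
  classical
  refine ⟨r, hrq, fun i hai => ?_⟩
  by_contra hdi
  push_neg at hdi
  have hd0 : d (i + r) = 0 := le_antisymm hdi (hd _)
  -- notation
  set E : ℤ ⊕ ℤ → Ω → ℝ := Sum.elim εX εY with hE
  have hEm : ∀ k, Measurable (E k) := by rintro (t | t); exacts [hmeasX t, hmeasY t]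
  set k0 : ℤ ⊕ ℤ := Sum.inl (-(i : ℤ)) with hk0
  set M2 : MeasurableSpace Ω :=
    ⨆ k ∈ ({k0}ᶜ : Set (ℤ ⊕ ℤ)), MeasurableSpace.comap (E k) inferInstance with hM2
  have hIndep : Indep (MeasurableSpace.comap (E k0) inferInstance) M2 μ := by
    have h := indep_iSup_of_disjoint
      (m := fun k => MeasurableSpace.comap (E k) inferInstance)
      (fun k => (hEm k).comap_le) hindep.iIndep
      (S := ({k0} : Set (ℤ ⊕ ℤ))) (T := ({k0}ᶜ : Set (ℤ ⊕ ℤ))) disjoint_compl_right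
    simpa [hM2] using h
  -- measurability of the ε's w.r.t. M2
  have hmem : ∀ k, k ≠ k0 → Measurable[M2] (E k) := by
    intro k hk
    have h1 : Measurable[MeasurableSpace.comap (E k) inferInstance] (E k) :=
      Measurable.of_comap_le le_rfl
    have h2 : MeasurableSpace.comap (E k) inferInstance ≤ M2 := by
      rw [hM2]
      exact le_iSup₂ (f := fun k (_ : k ∈ ({k0}ᶜ : Set (ℤ ⊕ ℤ))) =>
        MeasurableSpace.comap (E k) inferInstance) k hk
    exact h1.mono h2 le_rfl
  have hmemX : ∀ t : ℤ, t ≠ -(i : ℤ) → Measurable[M2] (εX t) := by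
    intro t ht
    exact hmem (Sum.inl t) (by simp [hk0, ht])
  have hmemY : ∀ t : ℤ, Measurable[M2] (εY t) := by
    intro t
    exact hmem (Sum.inr t) (by simp [hk0])
  -- the function W
  set W : Ω → ℝ := fun ω =>
      (∑' j : ℕ, if j = i + r then 0 else d j * εX ((r : ℤ) - (j : ℤ)) ω)
      + (∑' j : ℕ, b j * εY ((r : ℤ) - (j : ℤ)) ω)
      - δr * (∑' j : ℕ, if j = i then 0 else a j * εX ((0 : ℤ) - (j : ℤ)) ω)
      - δr * (∑' j : ℕ, c j * εY ((0 : ℤ) - (j : ℤ)) ω)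
      - (∑' j : ℕ, if j = i + r then 0 else p j * εX ((r : ℤ) - (j : ℤ)) ω)
      - (∑' j : ℕ, s j * εY ((r : ℤ) - (j : ℤ)) ω) with hWdef
  have hcast1 : ((r : ℤ) - ((i + r : ℕ) : ℤ)) = -(i : ℤ) := by push_cast; ring
  have hcast2 : ((0 : ℤ) - ((i : ℕ) : ℤ)) = -(i : ℤ) := by ring
  -- key pointwise identity
  have key : ∀ ω, (δr * a i + p (i + r)) * εX (-(i : ℤ)) ω = W ω := by
    intro ω
    have h1 := hYrep (r : ℤ) ω
    have h2 := hstruct ω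
    have h3 := hXrep 0 ω
    have eD := Summable.tsum_eq_add_tsum_ite ((hsummable ω r).2.2.2.1) (i + r)
    have eP := Summable.tsum_eq_add_tsum_ite ((hsummable ω r).2.2.2.2.1) (i + r)
    have eA := Summable.tsum_eq_add_tsum_ite ((hsummable ω 0).1) i
    rw [hcast1] at eD eP
    rw [hcast2] at eA
    rw [h1, h3] at h2
    rw [eD] at h2
    rw [eP] at h2
    rw [eA] at h2
    rw [hWdef]
    simp only
    rw [hd0] at h2
    linarith [h2]
  have hcc : 0 < δr * a i + p (i + r) := by
    have := hp (i + r)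
    nlinarith
  -- summability of the masked series
  have hWmeas : Measurable[M2] W := by
    rw [hWdef]
    have m1 : Measurable[M2] fun ω =>
        ∑' j : ℕ, if j = i + r then 0 else d j * εX ((r : ℤ) - (j : ℤ)) ω := by
      apply meas_tsum_aux
      · intro j
        by_cases h : j = i + r
        · simp only [h, if_true]; exact measurable_const
        · simp only [h, if_false]
          exact (hmemX _ (by intro hco; apply h; omega)).const_mul (d j)
      · intro ω; exact summable_mask ((hsummable ω r).2.2.2.1) (i + r)
    have m2 : Measurable[M2] fun ω => ∑' j : ℕ, b j * εY ((r : ℤ) - (j : ℤ)) ω := by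
      apply meas_tsum_aux
      · intro j; exact (hmemY _).const_mul (b j)
      · intro ω; exact (hsummable ω r).2.2.1
    have m3 : Measurable[M2] fun ω =>
        ∑' j : ℕ, if j = i then 0 else a j * εX ((0 : ℤ) - (j : ℤ)) ω := by
      apply meas_tsum_aux
      · intro j
        by_cases h : j = i
        · simp only [h, if_true]; exact measurable_const
        · simp only [h, if_false]
          exact (hmemX _ (by intro hco; apply h; omega)).const_mul (a j)
      · intro ω; exact summable_mask ((hsummable ω 0).1) i
    have m4 : Measurable[M2] fun ω => ∑' j : ℕ, c j * εY ((0 : ℤ) - (j : ℤ)) ω := by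
      apply meas_tsum_aux
      · intro j; exact (hmemY _).const_mul (c j)
      · intro ω; exact (hsummable ω 0).2.1
    have m5 : Measurable[M2] fun ω =>
        ∑' j : ℕ, if j = i + r then 0 else p j * εX ((r : ℤ) - (j : ℤ)) ω := by
      apply meas_tsum_aux
      · intro j
        by_cases h : j = i + r
        · simp only [h, if_true]; exact measurable_const
        · simp only [h, if_false]
          exact (hmemX _ (by intro hco; apply h; omega)).const_mul (p j)
      · intro ω; exact summable_mask ((hsummable ω r).2.2.2.2.1) (i + r)
    have m6 : Measurable[M2] fun ω => ∑' j : ℕ, s j * εY ((r : ℤ) - (j : ℤ)) ω := by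
      apply meas_tsum_aux
      · intro j; exact (hmemY _).const_mul (s j)
      · intro ω; exact (hsummable ω r).2.2.2.2.2
    exact (((((m1.add m2).sub (m3.const_mul δr)).sub (m4.const_mul δr)).sub m5).sub m6)
  -- zero-one law for the CDF of εX (-i)
  have h01 : ∀ t : ℝ, μ {ω | εX (-(i : ℤ)) ω ≤ t} = 0 ∨ μ {ω | εX (-(i : ℤ)) ω ≤ t} = 1 := by
    intro t
    set A := {ω | εX (-(i : ℤ)) ω ≤ t} with hA
    have hset : A = W ⁻¹' (Set.Iic ((δr * a i + p (i + r)) * t)) := by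
      ext ω
      simp only [hA, Set.mem_setOf_eq, Set.mem_preimage, Set.mem_Iic]
      rw [← key ω]
      constructor
      · intro h; exact mul_le_mul_of_nonneg_left h hcc.le
      · intro h; exact le_of_mul_le_mul_left h hcc
    have hm1 : MeasurableSet[MeasurableSpace.comap (E k0) inferInstance] A :=
      ⟨Set.Iic t, measurableSet_Iic, rfl⟩
    have hm2 : MeasurableSet[M2] A := by
      rw [hset]; exact hWmeas measurableSet_Iic
    have hmul : μ A = μ A * μ A := by
      have h := (Indep_iff _ _ μ).1 hIndep A A hm1 hm2
      rwa [Set.inter_self] at h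
    rcases eq_or_ne (μ A) 0 with h | h
    · exact Or.inl h
    · right
      have hy := congrArg ENNReal.toReal hmul
      rw [ENNReal.toReal_mul] at hy
      have hyne : (μ A).toReal ≠ 0 := by
        simp only [ne_eq, ENNReal.toReal_eq_zero_iff, not_or]
        exact ⟨h, measure_ne_top μ A⟩
      have h1 : (μ A).toReal * 1 = (μ A).toReal * (μ A).toReal := by linarith [hy]
      have h2 : (1 : ℝ) = (μ A).toReal := mul_left_cancel₀ hyne h1
      exact (ENNReal.toReal_eq_one_iff (μ A)).1 h2.symm
  clear hIndep hWmeas hmem hmemX hmemY hM2 M2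
  obtain ⟨v, hv⟩ := atom_of_zero_one μ (εX (-(i : ℤ))) (hmeasX _) h01
  exact hv (hcontX _ v)
end
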